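/- arXiv:2306.15814 — 5 statements merged into one kernel-verified Lean document; each statement's English description precedes it below -/
import Mathlib

section
/- Consider a directed acyclic graph with strictly upper triangular adjacency matrix G = [[A, I+C],[0, B]], where A and B represent subgraphs of equal order and C is strictly upper triangular, and let R = [[A, I],[0, B]]. If B = C, then p(G) = p(R), where p(·) denotes the number of vertices along the longest directed path in the graph represented by the given adjacency matrix. -/
/-- `pLen M` is the number of vertices along the longest directed (simple) path in the
directed graph whose adjacency matrix is `M` (an edge from `a` to `b` iff `M a b ≠ 0`). -/
noncomputable def pLen {V : Type*} [Fintype V] (M : Matrix V V ℕ) : ℕ :=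
  sSup {r : ℕ | ∃ l : List V, l.Nodup ∧ l.Chain' (fun a b => M a b ≠ 0) ∧ l.length = r}

/-- A matrix is strictly upper triangular. -/
def StrictUpper {q : ℕ} (A : Matrix (Fin q) (Fin q) ℕ) : Prop :=
  ∀ a b : Fin q, b ≤ a → A a b = 0

/-- A 0–1 matrix (adjacency matrix). -/
def ZeroOne {q : ℕ} (A : Matrix (Fin q) (Fin q) ℕ) : Prop :=
  ∀ a b : Fin q, A a b ≤ 1

section aux

variable {V : Type*} [Fintype V]

private lemma pLen_bdd (M : Matrix V V ℕ) :
    BddAbove {r : ℕ | ∃ l : List V, l.Nodup ∧ l.Chain' (fun a b => M a b ≠ 0) ∧ l.length = r} :=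
  ⟨Fintype.card V, fun _ ⟨_, hnd, _, hlen⟩ => hlen ▸ hnd.length_le_card⟩

private lemma pLen_ne (M : Matrix V V ℕ) :
    {r : ℕ | ∃ l : List V, l.Nodup ∧ l.Chain' (fun a b => M a b ≠ 0) ∧ l.length = r}.Nonempty :=
  ⟨0, [], by simp; exact List.isChain_nil⟩

private lemma pLen_le {M N : Matrix V V ℕ}
    (h : ∀ l : List V, l.Nodup → l.Chain' (fun a b => M a b ≠ 0) →
      ∃ l' : List V, l'.Nodup ∧ l'.Chain' (fun a b => N a b ≠ 0) ∧ l.length ≤ l'.length) :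
    pLen M ≤ pLen N := by
  apply csSup_le (pLen_ne M)
  rintro r ⟨l, hnd, hch, rfl⟩
  obtain ⟨l', hnd', hch', hlen⟩ := h l hnd hch
  exact hlen.trans (le_csSup (pLen_bdd N) ⟨l', hnd', hch', rfl⟩)

end aux

private lemma decomp {q : ℕ} (M : Matrix (Fin q ⊕ Fin q) (Fin q ⊕ Fin q) ℕ)
    (h0 : ∀ a b, M (Sum.inr a) (Sum.inl b) = 0) :
    ∀ l : List (Fin q ⊕ Fin q), l.Chain' (fun a b => M a b ≠ 0) →
      ∃ xs ys : List (Fin q), l = xs.map Sum.inl ++ ys.map Sum.inr := by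
  intro l
  induction l with
  | nil => exact fun _ => ⟨[], [], rfl⟩
  | cons a t ih =>
    intro hch
    obtain ⟨xs, ys, rfl⟩ := ih hch.tail
    cases a with
    | inl x => exact ⟨x :: xs, ys, rfl⟩
    | inr y =>
      cases xs with
      | nil => exact ⟨[], y :: ys, rfl⟩
      | cons x₀ xs' =>
        exfalso
        have h := (List.isChain_cons.mp hch).1 (Sum.inl x₀) (by simp)
        exact h (h0 y x₀)

attribute [local simp] List.Chain'

/-- **Lemma (longest paths, part (i)).**  For strictly upper triangular adjacency matrices
`A`, `B`, `C` of equal order, if `B = C` then the longest path in the graph of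
`G = [[A, I + C], [0, B]]` has the same number of vertices as the longest path in the graph
of `R = [[A, I], [0, B]]`. -/
theorem pLen_fromBlocks_one_add_eq {q : ℕ} (A B C : Matrix (Fin q) (Fin q) ℕ)
    (hA : StrictUpper A) (hB : StrictUpper B) (hC : StrictUpper C)
    (hA01 : ZeroOne A) (hB01 : ZeroOne B) (hC01 : ZeroOne C)
    (hBC : B = C) :
    pLen (Matrix.fromBlocks A (1 + C) 0 B) = pLen (Matrix.fromBlocks A 1 0 B) := by
  subst hBC
  apply le_antisymm
  · -- pLen G ≤ pLen R
    apply pLen_le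
    intro l hnd hch
    obtain ⟨xs, ys, rfl⟩ := decomp _ (by simp) l hch
    unfold List.Chain' at *
    rw [List.isChain_append] at hch
    obtain ⟨hchx, hchy, hcross⟩ := hch
    have hchxA : xs.Chain' (fun a b => A a b ≠ 0) := by
      rw [List.isChain_map] at hchx
      simpa using hchx
    have hchyB : ys.Chain' (fun a b => B a b ≠ 0) := by
      rw [List.isChain_map] at hchy
      simpa using hchy
    rcases xs.eq_nil_or_concat with rfl | ⟨xs₀, u, rfl⟩
    · refine ⟨ys.map Sum.inr, hnd.of_append_right, ?_, by simp⟩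
      rw [List.isChain_map]
      simpa using hchyB
    rcases ys with _ | ⟨v, ys₀⟩
    · refine ⟨(xs₀.concat u).map Sum.inl, by simpa using hnd, ?_, by simp⟩
      rw [List.isChain_map]
      simpa using hchxA
    have hcross' : Matrix.fromBlocks A (1 + B) 0 B (Sum.inl u) (Sum.inr v) ≠ 0 := by
      apply hcross
      · rw [List.getLast?_map]; simp
      · simp
    have hGuv : (1 + B) u v ≠ 0 := by simpa using hcross'
    by_cases huv : u = v
    · refine ⟨(xs₀.concat u).map Sum.inl ++ (v :: ys₀).map Sum.inr, hnd, ?_, le_rfl⟩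
      rw [List.isChain_append]
      refine ⟨?_, ?_, ?_⟩
      · rw [List.isChain_map]; simpa using hchxA
      · rw [List.isChain_map]; simpa using hchyB
      · intro x hx y hy
        rw [List.getLast?_map] at hx
        simp at hx hy
        subst hx; subst hy
        simp [Matrix.one_apply, huv]
    · have hBuv : B u v ≠ 0 := by
        have : (1 + B) u v = (if u = v then 1 else 0) + B u v := by
          simp [Matrix.one_apply]
        rw [this, if_neg huv, zero_add] at hGuv
        exact hGuv
      have hlt : ∀ w ∈ v :: ys₀, u < w := by
        have huvlt : u < v := lt_of_not_ge fun h => hBuv (hB u v h)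
        have hchlt : (v :: ys₀).Chain' (· < ·) :=
          hchyB.imp fun {a b} h => lt_of_not_ge fun hle => h (hB a b hle)
        have hc : (u :: v :: ys₀).Chain' (· < ·) := List.isChain_cons_cons.mpr ⟨huvlt, hchlt⟩
        intro w hw
        exact List.rel_of_pairwise_cons (List.isChain_iff_pairwise.mp hc) hw
      refine ⟨(xs₀.concat u).map Sum.inl ++ (u :: v :: ys₀).map Sum.inr, ?_, ?_, by simp⟩
      · rw [List.nodup_append] at hnd ⊢
        obtain ⟨h1, h2, h3⟩ := hnd
        refine ⟨h1, ?_, ?_⟩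
        · rw [List.nodup_map_iff Sum.inr_injective] at h2 ⊢
          exact List.Pairwise.cons (fun w hw => (hlt w hw).ne) h2
        · intro a ha b hb
          rcases List.mem_map.mp ha with ⟨x, _, rfl⟩
          rcases List.mem_map.mp hb with ⟨y, _, rfl⟩
          simp
      · rw [List.isChain_append]
        refine ⟨?_, ?_, ?_⟩
        · rw [List.isChain_map]; simpa using hchxA
        · rw [List.isChain_map]
          refine List.isChain_cons_cons.mpr ⟨?_, ?_⟩
          · simpa using hBuv
          · simpa using hchyB
        · intro x hx y hy
          rw [List.getLast?_map] at hx
          simp at hx hy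
          subst hx; subst hy
          simp [Matrix.one_apply]
  · -- pLen R ≤ pLen G
    apply pLen_le
    intro l hnd hch
    refine ⟨l, hnd, hch.imp fun {a b} h hg => h ?_, le_rfl⟩
    rcases a with a | a <;> rcases b with b | b <;>
      simp_all [Matrix.one_apply] <;> omega
end

section
/- Consider a directed acyclic graph with strictly upper triangular adjacency matrix G = [[A, I+A],[0, A]], where A is a strictly upper triangular adjacency matrix. Then p(G) = p(A) + 1, where p(·) denotes the number of vertices along the longest directed path in the graph represented by the given adjacency matrix. -/
namespace PLenAux

lemma bddAboveS {V : Type*} [Fintype V] (M : Matrix V V ℕ) :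
    BddAbove {r : ℕ | ∃ l : List V, l.Nodup ∧ l.Chain' (fun a b => M a b ≠ 0) ∧ l.length = r} := by
  refine ⟨Fintype.card V, ?_⟩
  rintro r ⟨l, hnd, -, rfl⟩
  exact hnd.length_le_card

lemma memS {V : Type*} [Fintype V] (M : Matrix V V ℕ) :
    pLen M ∈ {r : ℕ | ∃ l : List V, l.Nodup ∧ l.Chain' (fun a b => M a b ≠ 0) ∧ l.length = r} :=
  Nat.sSup_mem ⟨0, [], by simp [List.Chain']⟩ (bddAboveS M)

lemma leS {V : Type*} [Fintype V] {M : Matrix V V ℕ} {r : ℕ}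
    (h : r ∈ {r : ℕ | ∃ l : List V, l.Nodup ∧ l.Chain' (fun a b => M a b ≠ 0) ∧ l.length = r}) :
    r ≤ pLen M :=
  le_csSup (bddAboveS M) h

lemma chain'_nodup {α : Type*} (g : α → ℕ) {R : α → α → Prop}
    (h : ∀ a b, R a b → g a < g b) {l : List α} (hl : l.Chain' R) : l.Nodup := by
  have h1 : (l.map g).Chain' (· < ·) := (List.isChain_map g).mpr (hl.imp h)
  have h2 : (l.map g).Pairwise (· < ·) := List.isChain_iff_pairwise.mp h1
  have h3 : (l.map g).Nodup := h2.imp ne_of_lt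
  exact h3.of_map g

variable {q : ℕ} {A : Matrix (Fin q) (Fin q) ℕ}

lemma Alt (hA : StrictUpper A) {a b : Fin q} (h : A a b ≠ 0) : a < b := by
  by_contra hc
  exact h (hA a b (le_of_not_gt hc))

lemma split (hA : StrictUpper A) {L : List (Fin q ⊕ Fin q)}
    (hL : L.Chain' (fun a b => Matrix.fromBlocks A (1 + A) 0 A a b ≠ 0)) :
    ∃ l1 l2 : List (Fin q), L = l1.map Sum.inl ++ l2.map Sum.inr := by
  induction L with
  | nil => exact ⟨[], [], rfl⟩
  | cons x L ih =>
    rw [List.Chain', List.isChain_cons] at hL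
    obtain ⟨l1, l2, rfl⟩ := ih hL.2
    cases x with
    | inl i => exact ⟨i :: l1, l2, rfl⟩
    | inr i =>
      cases l1 with
      | nil => exact ⟨[], i :: l2, rfl⟩
      | cons j l1' =>
        exfalso
        have := hL.1 (Sum.inl j) (by simp)
        simp [Matrix.fromBlocks] at this

end PLenAux

open PLenAux

/-- **Lemma (longest paths, part (iii)).**  For a strictly upper triangular adjacency matrix `A`
(of positive order), the longest path in the graph of `G = [[A, I + A], [0, A]]` has
`p(A) + 1` vertices. -/
theorem pLen_fromBlocks_one_add_self {q : ℕ} (hq : 0 < q) (A : Matrix (Fin q) (Fin q) ℕ)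
    (hA : StrictUpper A) (hA01 : ZeroOne A) :
    pLen (Matrix.fromBlocks A (1 + A) 0 A) = pLen A + 1 := by
  set G := Matrix.fromBlocks A (1 + A) 0 A with hG
  -- the measure on the sum type
  set g : Fin q ⊕ Fin q → ℕ := Sum.elim (fun i => 2 * (i : ℕ)) (fun i => 2 * (i : ℕ) + 1) with hg
  have hGlt : ∀ a b, G a b ≠ 0 → g a < g b := by
    rintro (a | a) (b | b) h <;>
      simp only [hG, Matrix.fromBlocks_apply₁₁, Matrix.fromBlocks_apply₁₂,
        Matrix.fromBlocks_apply₂₁, Matrix.fromBlocks_apply₂₂, hg, Sum.elim_inl, Sum.elim_inr] at h ⊢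
    · have := Alt hA h; omega
    · rw [Matrix.add_apply, Matrix.one_apply] at h
      rcases eq_or_ne a b with rfl | hne
      · omega
      · have : A a b ≠ 0 := by simpa [hne] using h
        have := Alt hA this; omega
    · simp [Matrix.zero_apply] at h
    · have := Alt hA h; omega
  -- every A-chain is nodup
  have hAnodup : ∀ {l : List (Fin q)}, l.Chain' (fun a b => A a b ≠ 0) → l.Nodup := by
    intro l hl
    exact chain'_nodup (fun i : Fin q => (i : ℕ)) (fun a b h => Alt hA h) hl
  apply le_antisymm
  · -- upper bound
    obtain ⟨L, hLnd, hLch, hLlen⟩ := memS G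
    rw [← hLlen]
    obtain ⟨l1, l2, rfl⟩ := split hA hLch
    rw [List.Chain', List.isChain_append] at hLch
    obtain ⟨hc1, hc2, hc12⟩ := hLch
    have h1 : l1.Chain' (fun a b => A a b ≠ 0) := by
      rw [List.isChain_map] at hc1
      exact hc1.imp (fun a b h => by simpa [hG] using h)
    have h2 : l2.Chain' (fun a b => A a b ≠ 0) := by
      rw [List.isChain_map] at hc2
      exact hc2.imp (fun a b h => by simpa [hG] using h)
    rcases eq_or_ne l1 [] with rfl | hn1
    · simp only [List.map_nil, List.nil_append, List.length_map]
      have : l2.length ≤ pLen A := leS ⟨l2, hAnodup h2, h2, rfl⟩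
      omega
    rcases eq_or_ne l2 [] with rfl | hn2
    · simp only [List.map_nil, List.append_nil, List.length_map]
      have : l1.length ≤ pLen A := leS ⟨l1, hAnodup h1, h1, rfl⟩
      omega
    · -- both nonempty
      set x := l1.getLast hn1 with hx
      set y := l2.head hn2 with hy
      have hedge : G (Sum.inl x) (Sum.inr y) ≠ 0 := by
        apply hc12
        · rw [List.getLast?_map]
          rw [List.getLast?_eq_getLast hn1]
          simp [hx]
        · rw [List.head?_map, List.head?_eq_head hn2]
          simp [hy]
      have hxy : x = y ∨ A x y ≠ 0 := by
        simp only [hG, Matrix.fromBlocks_apply₁₂, Matrix.add_apply, Matrix.one_apply] at hedge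
        rcases eq_or_ne x y with h | h
        · exact Or.inl h
        · right; simpa [h] using hedge
      rcases hxy with heq | hne
      · -- x = y : drop the duplicate
        have htail : l2.tail.Chain' (fun a b => A a b ≠ 0) := h2.tail
        have hlink : ∀ a ∈ l1.getLast?, ∀ b ∈ l2.tail.head?, A a b ≠ 0 := by
          intro a ha b hb
          rw [List.getLast?_eq_getLast hn1] at ha
          simp only [Option.mem_some_iff] at ha
          subst ha
          have h2' : l2.Chain' (fun a b => A a b ≠ 0) := h2
          rw [← List.cons_head_tail (l := l2) hn2, List.Chain', List.isChain_cons] at h2'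
          have := h2'.1 b hb
          rw [← hx, heq]
          exact this
        have hchain : (l1 ++ l2.tail).Chain' (fun a b => A a b ≠ 0) :=
          List.isChain_append.mpr ⟨h1, htail, hlink⟩
        have : (l1 ++ l2.tail).length ≤ pLen A := leS ⟨_, hAnodup hchain, hchain, rfl⟩
        have hl2 : 0 < l2.length := List.length_pos_iff.mpr hn2
        simp only [List.length_append, List.length_map, List.length_tail] at this ⊢
        omega
      · -- real edge
        have hlink : ∀ a ∈ l1.getLast?, ∀ b ∈ l2.head?, A a b ≠ 0 := by
          intro a ha b hb
          rw [List.getLast?_eq_getLast hn1] at ha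
          rw [List.head?_eq_head hn2] at hb
          simp only [Option.mem_some_iff] at ha hb
          subst ha; subst hb
          exact hne
        have hchain : (l1 ++ l2).Chain' (fun a b => A a b ≠ 0) :=
          List.isChain_append.mpr ⟨h1, h2, hlink⟩
        have : (l1 ++ l2).length ≤ pLen A := leS ⟨_, hAnodup hchain, hchain, rfl⟩
        simp only [List.length_append, List.length_map] at this ⊢
        omega
  · -- lower bound
    have h1le : 1 ≤ pLen A := leS ⟨[⟨0, hq⟩], by simp, by simp [List.Chain'], rfl⟩
    obtain ⟨l, hnd, hch, hlen⟩ := memS A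
    have hn : l ≠ [] := by
      intro h; rw [h] at hlen; simp at hlen; omega
    set x := l.getLast hn with hx
    set L : List (Fin q ⊕ Fin q) := l.map Sum.inl ++ [Sum.inr x] with hL
    have hchL : L.Chain' (fun a b => G a b ≠ 0) := by
      rw [hL, List.Chain', List.isChain_append]
      refine ⟨?_, by simp, ?_⟩
      · rw [List.isChain_map]
        exact hch.imp (fun a b h => by simpa [hG] using h)
      · intro a ha b hb
        rw [List.getLast?_map, List.getLast?_eq_getLast hn] at ha
        simp only [Option.map_some, Option.mem_some_iff, List.head?_cons] at ha hb
        subst ha; subst hb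
        simp only [hG, Matrix.fromBlocks_apply₁₂, Matrix.add_apply, Matrix.one_apply, ← hx]
        simp [hA x x le_rfl]
    have hndL : L.Nodup := chain'_nodup g hGlt hchL
    have : L.length = pLen A + 1 := by
      rw [hL]; simp [hlen]
    exact this ▸ leS ⟨L, hndL, hchL, rfl⟩
end

section
/- Let A be a complex matrix in block upper triangular form with diagonal blocks A_{11},…,A_{rr}. Associate with A the reduced directed acyclic graph with adjacency matrix G, where G_{ij} = 1 if the off-diagonal block A_{ij} ≠ 0 and i ≠ j, and G_{ij} = 0 otherwise. Then the size of the largest Jordan block of A does not exceed the maximal sum of the sizes of the largest Jordan blocks of A_{ii},…,A_{jj} taken along all possible directed paths (i,…,j) in the graph of G. -/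
open Matrix Filter Asymptotics Topology

attribute [local instance] Matrix.frobeniusNormedAddCommGroup Matrix.frobeniusNormedSpace

/-- Index (size of largest Jordan block) of the eigenvalue `μ` of `A`. -/
noncomputable def nuIdx {N : Type*} [Fintype N] [DecidableEq N] (A : Matrix N N ℂ) (μ : ℂ) : ℕ :=
  sInf {k : ℕ | LinearMap.ker (((A - μ • 1) ^ k).mulVecLin) =
      LinearMap.ker (((A - μ • 1) ^ (k + 1)).mulVecLin)}

/-- Size of the largest Jordan block of `A`. -/
noncomputable def jordanBound {N : Type*} [Fintype N] [DecidableEq N] (A : Matrix N N ℂ) : ℕ :=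
  sSup (nuIdx A '' spectrum ℂ A)

/-- `A ∈ M_N(Ω, m)`: spectrum contained in `Ω` and largest Jordan block of size at most `m`. -/
def MnSet {N : Type*} [Fintype N] [DecidableEq N] (Ω : Set ℂ) (m : ℕ) (A : Matrix N N ℂ) : Prop :=
  spectrum ℂ A ⊆ Ω ∧ jordanBound A ≤ m

section Aux

variable {n : Type*} [Fintype n] [DecidableEq n]

private lemma ker_pow_le (B : Matrix n n ℂ) (k : ℕ) :
    LinearMap.ker ((B ^ k).mulVecLin) ≤ LinearMap.ker ((B ^ (k + 1)).mulVecLin) := by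
  intro x hx
  simp only [LinearMap.mem_ker, Matrix.mulVecLin_apply] at hx ⊢
  rw [pow_succ', ← Matrix.mulVec_mulVec, hx, Matrix.mulVec_zero]

private lemma stab_succ (B : Matrix n n ℂ) (k : ℕ)
    (h : LinearMap.ker ((B ^ k).mulVecLin) = LinearMap.ker ((B ^ (k + 1)).mulVecLin)) :
    LinearMap.ker ((B ^ (k + 1)).mulVecLin) = LinearMap.ker ((B ^ (k + 2)).mulVecLin) := by
  refine le_antisymm (ker_pow_le B (k + 1)) ?_
  intro x hx
  simp only [LinearMap.mem_ker, Matrix.mulVecLin_apply] at hx ⊢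
  have h1 : (B ^ (k + 1)) *ᵥ (B *ᵥ x) = 0 := by
    rw [Matrix.mulVec_mulVec, ← pow_succ]
    exact hx
  have h2 : B *ᵥ x ∈ LinearMap.ker ((B ^ (k + 1)).mulVecLin) := by
    simpa [Matrix.mulVecLin_apply] using h1
  rw [← h] at h2
  have h3 : (B ^ k) *ᵥ (B *ᵥ x) = 0 := by
    simpa [Matrix.mulVecLin_apply] using h2
  rw [pow_succ, ← Matrix.mulVec_mulVec]
  exact h3

private lemma stab_add (B : Matrix n n ℂ) (k : ℕ)
    (h : LinearMap.ker ((B ^ k).mulVecLin) = LinearMap.ker ((B ^ (k + 1)).mulVecLin)) (d : ℕ) :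
    LinearMap.ker ((B ^ (k + d)).mulVecLin) = LinearMap.ker ((B ^ (k + d + 1)).mulVecLin) := by
  induction d with
  | zero => exact h
  | succ d ih => exact stab_succ B (k + d) ih

private lemma ker_eq_of_stab (B : Matrix n n ℂ) (k : ℕ)
    (h : LinearMap.ker ((B ^ k).mulVecLin) = LinearMap.ker ((B ^ (k + 1)).mulVecLin))
    {m : ℕ} (hm : k ≤ m) :
    LinearMap.ker ((B ^ m).mulVecLin) = LinearMap.ker ((B ^ k).mulVecLin) := by
  obtain ⟨d, rfl⟩ := Nat.exists_eq_add_of_le hm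
  clear hm
  induction d with
  | zero => rfl
  | succ d ih =>
    rw [show k + (d + 1) = (k + d) + 1 from rfl, ← stab_add B k h d]
    exact ih

private lemma grow (B : Matrix n n ℂ) :
    ∀ k : ℕ, (∀ j < k,
        LinearMap.ker ((B ^ j).mulVecLin) ≠ LinearMap.ker ((B ^ (j + 1)).mulVecLin)) →
      k ≤ Module.finrank ℂ (LinearMap.ker ((B ^ k).mulVecLin)) := by
  intro k
  induction k with
  | zero => intro _; exact Nat.zero_le _
  | succ k ih =>
    intro h
    have h1 : k ≤ Module.finrank ℂ (LinearMap.ker ((B ^ k).mulVecLin)) :=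
      ih fun j hj => h j (hj.trans (Nat.lt_succ_self k))
    have h2 : LinearMap.ker ((B ^ k).mulVecLin) < LinearMap.ker ((B ^ (k + 1)).mulVecLin) :=
      lt_of_le_of_ne (ker_pow_le B k) (h k (Nat.lt_succ_self k))
    have h3 := Submodule.finrank_lt_finrank_of_lt h2
    omega

private lemma stabset_nonempty (B : Matrix n n ℂ) :
    {k : ℕ | LinearMap.ker ((B ^ k).mulVecLin) =
      LinearMap.ker ((B ^ (k + 1)).mulVecLin)}.Nonempty := by
  by_contra h
  rw [Set.not_nonempty_iff_eq_empty, Set.eq_empty_iff_forall_notMem] at h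
  have h1 := grow B (Module.finrank ℂ (n → ℂ) + 1) (fun j _ => h j)
  have h2 := Submodule.finrank_le
    (LinearMap.ker ((B ^ (Module.finrank ℂ (n → ℂ) + 1)).mulVecLin))
  omega

private lemma nuIdx_spec (A : Matrix n n ℂ) (μ : ℂ) :
    LinearMap.ker (((A - μ • 1) ^ (nuIdx A μ)).mulVecLin) =
      LinearMap.ker (((A - μ • 1) ^ (nuIdx A μ + 1)).mulVecLin) :=
  Nat.sInf_mem (stabset_nonempty _)

private lemma pow_nuIdx_eq_zero (A : Matrix n n ℂ) (μ : ℂ) {w : n → ℂ} {a : ℕ}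
    (hw : ((A - μ • 1) ^ a) *ᵥ w = 0) : ((A - μ • 1) ^ (nuIdx A μ)) *ᵥ w = 0 := by
  rcases le_or_gt a (nuIdx A μ) with h | h
  · obtain ⟨d, hd⟩ := Nat.exists_eq_add_of_le h
    rw [hd, show a + d = d + a from Nat.add_comm a d, pow_add, ← Matrix.mulVec_mulVec, hw,
      Matrix.mulVec_zero]
  · have hmem : w ∈ LinearMap.ker (((A - μ • 1) ^ a).mulVecLin) := by
      simpa [Matrix.mulVecLin_apply] using hw
    rw [ker_eq_of_stab (A - μ • 1) (nuIdx A μ) (nuIdx_spec A μ) h.le] at hmem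
    simpa [Matrix.mulVecLin_apply] using hmem

private lemma nuIdx_le {A : Matrix n n ℂ} {μ : ℂ} {K : ℕ}
    (h : LinearMap.ker (((A - μ • 1) ^ (K + 1)).mulVecLin) ≤
      LinearMap.ker (((A - μ • 1) ^ K).mulVecLin)) :
    nuIdx A μ ≤ K :=
  Nat.sInf_le (le_antisymm (ker_pow_le _ K) h)

private lemma nuIdx_le_card (A : Matrix n n ℂ) (μ : ℂ) : nuIdx A μ ≤ Fintype.card n := by
  by_contra h
  push_neg at h
  have h2 : ∀ j < Fintype.card n + 1,
      LinearMap.ker (((A - μ • 1) ^ j).mulVecLin) ≠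
        LinearMap.ker (((A - μ • 1) ^ (j + 1)).mulVecLin) := by
    intro j hj
    have hlt : j < nuIdx A μ := by omega
    exact Nat.notMem_of_lt_sInf hlt
  have h1 := grow (A - μ • 1) (Fintype.card n + 1) h2
  have h3 := Submodule.finrank_le
    (LinearMap.ker (((A - μ • 1) ^ (Fintype.card n + 1)).mulVecLin))
  rw [Module.finrank_pi] at h3
  omega

private lemma nuIdx_eq_zero_of_not_mem (A : Matrix n n ℂ) (μ : ℂ) (h : μ ∉ spectrum ℂ A) :
    nuIdx A μ = 0 := by
  have hu : IsUnit (algebraMap ℂ (Matrix n n ℂ) μ - A) := spectrum.notMem_iff.mp h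
  have hu2 : IsUnit (A - μ • 1) := by
    rw [Algebra.algebraMap_eq_smul_one] at hu
    simpa using hu.neg
  apply Nat.sInf_eq_zero.mpr
  left
  have hinj : Function.Injective (A - μ • 1).mulVec :=
    Matrix.mulVec_injective_iff_isUnit.mpr hu2
  have hker : LinearMap.ker ((A - μ • 1).mulVecLin) = ⊥ := by
    rw [Submodule.eq_bot_iff]
    intro x hx
    simp only [LinearMap.mem_ker, Matrix.mulVecLin_apply] at hx
    exact hinj (by rw [hx, Matrix.mulVec_zero])
  have h01 : LinearMap.ker (((A - μ • 1) ^ 0).mulVecLin) =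
      LinearMap.ker (((A - μ • 1) ^ 1).mulVecLin) := by
    rw [pow_zero, pow_one, Matrix.mulVecLin_one, hker, LinearMap.ker_id]
  exact h01

end Aux

open scoped Classical in

/-- **Friedland–Hershkowitz bound.**  For a block upper triangular complex matrix `A` with
diagonal blocks `A ⟨i,·⟩ ⟨i,·⟩`, the size of the largest Jordan block of `A` is bounded by the
maximal sum of the sizes of the largest Jordan blocks of the diagonal blocks along all directed
paths of the reduced graph (which has an edge `i → j` iff `i ≠ j` and the block `(i,j)` of `A`
is nonzero). -/
theorem jordanBound_le_sup_path_sum {r : ℕ} (sz : Fin r → ℕ)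
    (A : Matrix ((i : Fin r) × Fin (sz i)) ((i : Fin r) × Fin (sz i)) ℂ)
    (hupper : ∀ (i j : Fin r) (a : Fin (sz i)) (b : Fin (sz j)), j < i → A ⟨i, a⟩ ⟨j, b⟩ = 0) :
    jordanBound A ≤
      sSup ((fun l : List (Fin r) =>
          (l.map fun i => jordanBound (Matrix.of fun a b : Fin (sz i) => A ⟨i, a⟩ ⟨i, b⟩)).sum) ''
        {l : List (Fin r) | l ≠ [] ∧
          l.Chain' fun i j => i ≠ j ∧ ∃ a b, A ⟨i, a⟩ ⟨j, b⟩ ≠ 0}) := by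
  set D : (i : Fin r) → Matrix (Fin (sz i)) (Fin (sz i)) ℂ :=
    fun i => Matrix.of fun a b : Fin (sz i) => A ⟨i, a⟩ ⟨i, b⟩ with hD
  set Edge : Fin r → Fin r → Prop := fun i j => i ≠ j ∧ ∃ a b, A ⟨i, a⟩ ⟨j, b⟩ ≠ 0 with hEdge
  set m : Fin r → ℕ := fun i => jordanBound (D i) with hm
  set K : ℕ := sSup ((fun l : List (Fin r) => (l.map m).sum) ''
      {l : List (Fin r) | l ≠ [] ∧ l.Chain' Edge}) with hK
  -- edges increase
  have hEdge_lt : ∀ i j, Edge i j → i < j := by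
    intro i j hij
    obtain ⟨hne, a, b, hab⟩ := hij
    rcases lt_trichotomy i j with h | h | h
    · exact h
    · exact absurd h hne
    · exact absurd (hupper i j a b h) hab
  have hnodup : ∀ l : List (Fin r), l.Chain' Edge → l.Nodup := by
    intro l hl
    have h1 : l.Chain' (· < ·) := List.IsChain.imp (fun a b h => hEdge_lt a b h) hl
    exact (List.isChain_iff_pairwise.mp h1).imp ne_of_lt
  have hsum_le : ∀ (f : Fin r → ℕ) (l : List (Fin r)), l.Chain' Edge →
      (l.map f).sum ≤ ∑ i, f i := by
    intro f l hl
    rw [← List.sum_toFinset f (hnodup l hl)]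
    exact Finset.sum_le_sum_of_subset (Finset.subset_univ _)
  have bddK : BddAbove ((fun l : List (Fin r) => (l.map m).sum) ''
      {l : List (Fin r) | l ≠ [] ∧ l.Chain' Edge}) := by
    refine ⟨∑ i, m i, ?_⟩
    rintro s ⟨l, ⟨_, hc⟩, rfl⟩
    exact hsum_le m l hc
  show jordanBound A ≤ K
  refine csSup_le' ?_
  rintro s ⟨μ, hμspec, rfl⟩
  -- per-eigenvalue setup
  set B : Matrix ((i : Fin r) × Fin (sz i)) ((i : Fin r) × Fin (sz i)) ℂ := A - μ • 1 with hB
  set ν : Fin r → ℕ := fun i => nuIdx (D i) μ with hν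
  have hνm : ∀ i, ν i ≤ m i := by
    intro i
    by_cases hmem : μ ∈ spectrum ℂ (D i)
    · rw [hm]
      show ν i ≤ jordanBound (D i)
      unfold jordanBound
      refine le_csSup ⟨Fintype.card (Fin (sz i)), ?_⟩ ⟨μ, hmem, rfl⟩
      rintro t ⟨μ', _, rfl⟩
      exact nuIdx_le_card _ _
    · rw [hν]
      show nuIdx (D i) μ ≤ m i
      rw [nuIdx_eq_zero_of_not_mem _ _ hmem]
      exact Nat.zero_le _
  set PS : Fin r → Set ℕ := fun i =>
    (fun l : List (Fin r) => (l.map ν).sum) '' {l | l.Chain' Edge ∧ l.head? = some i} with hPS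
  have bddPS : ∀ i, BddAbove (PS i) := by
    intro i
    refine ⟨∑ i, ν i, ?_⟩
    rintro s ⟨l, ⟨hc, _⟩, rfl⟩
    exact hsum_le ν l hc
  set Nn : Fin r → ℕ := fun i => sSup (PS i) with hNn
  have hmemPS : ∀ i, ν i ∈ PS i := by
    intro i
    exact ⟨[i], ⟨List.isChain_singleton i, rfl⟩, by simp⟩
  have hNn_ge : ∀ i, ν i ≤ Nn i := fun i => le_csSup (bddPS i) (hmemPS i)
  have hNn_edge : ∀ i j, Edge i j → ν i + Nn j ≤ Nn i := by
    intro i j hij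
    have hub : ∀ s ∈ PS j, ν i + s ≤ Nn i := by
      rintro s ⟨l, ⟨hc, hh⟩, rfl⟩
      refine le_csSup (bddPS i) ⟨i :: l, ⟨List.isChain_cons.mpr ⟨?_, hc⟩, rfl⟩, by simp⟩
      intro h hmem
      rw [hh] at hmem
      cases hmem
      exact hij
    have hPSne : (PS j).Nonempty := ⟨ν j, hmemPS j⟩
    exact hub _ (Nat.sSup_mem hPSne (bddPS j))
  have hNn_le : ∀ i, Nn i ≤ K := by
    intro i
    refine csSup_le ⟨ν i, hmemPS i⟩ ?_
    rintro s ⟨l, ⟨hc, hh⟩, rfl⟩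
    have hne : l ≠ [] := by intro h; rw [h] at hh; simp at hh
    calc (l.map ν).sum ≤ (l.map m).sum := List.sum_le_sum (fun x _ => hνm x)
    _ ≤ K := le_csSup bddK ⟨l, ⟨hne, hc⟩, rfl⟩
  -- entries of B
  have hBdiag : ∀ i (a b : Fin (sz i)), B ⟨i, a⟩ ⟨i, b⟩ = (D i - μ • 1) a b := by
    intro i a b
    simp [hB, hD, Matrix.sub_apply, Matrix.smul_apply, Matrix.one_apply, Sigma.mk.inj_iff]
  have hBoff : ∀ i j (a : Fin (sz i)) (b : Fin (sz j)), i ≠ j →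
      B ⟨i, a⟩ ⟨j, b⟩ = A ⟨i, a⟩ ⟨j, b⟩ := by
    intro i j a b hij
    simp [hB, Matrix.sub_apply, Matrix.smul_apply, Matrix.one_apply, Sigma.mk.inj_iff, hij]
  -- one multiplication step
  have hstep : ∀ (y : ((i : Fin r) × Fin (sz i)) → ℂ) (i : Fin r),
      (∀ j, Edge i j → ∀ b, y ⟨j, b⟩ = 0) →
      ∀ a, (B *ᵥ y) ⟨i, a⟩ = ((D i - μ • 1) *ᵥ fun b => y ⟨i, b⟩) a := by
    intro y i hy a
    have expand : (B *ᵥ y) ⟨i, a⟩ = ∑ j : Fin r, ∑ b : Fin (sz j), B ⟨i, a⟩ ⟨j, b⟩ * y ⟨j, b⟩ := by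
      rw [Matrix.mulVec, dotProduct, ← Finset.univ_sigma_univ, Finset.sum_sigma]
    rw [expand, Finset.sum_eq_single i]
    · rw [Matrix.mulVec, dotProduct]
      exact Finset.sum_congr rfl fun b _ => by rw [hBdiag]
    · intro j _ hji
      refine Finset.sum_eq_zero fun b _ => ?_
      by_cases hE : Edge i j
      · rw [hy j hE b, mul_zero]
      · have hA : A ⟨i, a⟩ ⟨j, b⟩ = 0 := by
          by_contra hA
          exact hE ⟨Ne.symm hji, a, b, hA⟩
        rw [hBoff i j a b (Ne.symm hji), hA, zero_mul]
    · intro h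
      exact absurd (Finset.mem_univ i) h
  -- main induction
  have main : ∀ (x : ((i : Fin r) × Fin (sz i)) → ℂ), (B ^ (K + 1)) *ᵥ x = 0 →
      ∀ (d : ℕ) (i : Fin r), r - (i : ℕ) ≤ d → ∀ k, Nn i ≤ k →
      ∀ a, ((B ^ k) *ᵥ x) ⟨i, a⟩ = 0 := by
    intro x hx d
    induction d with
    | zero =>
      intro i hi
      exact absurd hi (by have := i.isLt; omega)
    | succ d ih =>
      intro i hi k hk a
      set s : Finset (Fin r) := Finset.univ.filter (fun j => Edge i j) with hs
      set c : ℕ := s.sup Nn with hc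
      have hIH : ∀ j, Edge i j → ∀ k', Nn j ≤ k' → ∀ b, ((B ^ k') *ᵥ x) ⟨j, b⟩ = 0 := by
        intro j hij
        have hij' : (i : ℕ) < (j : ℕ) := hEdge_lt i j hij
        exact ih j (by have := j.isLt; omega)
      have hνc : ν i + c ≤ Nn i := by
        rcases s.eq_empty_or_nonempty with hse | hsne
        · rw [hc, hse]
          simpa using hNn_ge i
        · obtain ⟨j, hj, hje⟩ := Finset.exists_mem_eq_sup s hsne Nn
          rw [hc, hje]
          exact hNn_edge i j (Finset.mem_filter.mp hj).2
      set w : Fin (sz i) → ℂ := fun b => ((B ^ c) *ᵥ x) ⟨i, b⟩ with hw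
      have hchain : ∀ e (a' : Fin (sz i)), ((B ^ (c + e)) *ᵥ x) ⟨i, a'⟩ =
          (((D i - μ • 1) ^ e) *ᵥ w) a' := by
        intro e
        induction e with
        | zero => intro a'; simp [hw]
        | succ e ihe =>
          intro a'
          have h1 : (B ^ (c + e + 1)) *ᵥ x = B *ᵥ ((B ^ (c + e)) *ᵥ x) := by
            rw [Matrix.mulVec_mulVec, ← pow_succ']
          have hz : ∀ j, Edge i j → ∀ b, ((B ^ (c + e)) *ᵥ x) ⟨j, b⟩ = 0 := by
            intro j hij b
            have hjc : Nn j ≤ c := Finset.le_sup (Finset.mem_filter.mpr ⟨Finset.mem_univ j, hij⟩)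
            exact hIH j hij (c + e) (by omega) b
          rw [show c + (e + 1) = (c + e) + 1 from rfl, h1,
            hstep ((B ^ (c + e)) *ᵥ x) i hz a']
          have h2 : (fun b => ((B ^ (c + e)) *ᵥ x) ⟨i, b⟩) = ((D i - μ • 1) ^ e) *ᵥ w :=
            funext ihe
          rw [h2, Matrix.mulVec_mulVec, ← pow_succ']
      have hcK : c ≤ K + 1 := by
        have h1 := hNn_le i
        omega
      have hwzero : ((D i - μ • 1) ^ (K + 1 - c)) *ᵥ w = 0 := by
        funext a'
        have h := hchain (K + 1 - c) a'
        rw [Nat.add_sub_cancel' hcK] at h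
        rw [← h, hx]
        rfl
      have hνw : ((D i - μ • 1) ^ (ν i)) *ᵥ w = 0 := by
        rw [hν]
        exact pow_nuIdx_eq_zero (D i) μ hwzero
      have hck : c ≤ k := by have h1 := hNn_le i; omega
      have h := hchain (k - c) a
      rw [Nat.add_sub_cancel' hck] at h
      rw [h]
      have hfin : ((D i - μ • 1) ^ (k - c)) *ᵥ w = 0 := by
        rw [show k - c = (k - c - ν i) + ν i by omega, pow_add, ← Matrix.mulVec_mulVec, hνw,
          Matrix.mulVec_zero]
      rw [hfin]
      rfl
  -- conclude
  apply nuIdx_le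
  rw [← hB]
  intro x hx
  simp only [LinearMap.mem_ker, Matrix.mulVecLin_apply] at hx ⊢
  refine funext fun p => ?_
  obtain ⟨i, a⟩ := p
  exact main x hx r i (by omega) K (hNn_le i) a
end

section
/- Let A(x) be an n×n complex-matrix-valued function of j variables, k times differentiable in a neighborhood of x̄ with A(x) ∈ M_n(Ω,m) there. For fixed indices d_1,…,d_k ∈ {1,…,j}, define X_0(x) = A(x); Q_i(x,ε) = [[X_{i−1}(x), (X_{i−1}(x + ε e_{d_i}) − X_{i−1}(x))/ε],[0, X_{i−1}(x + ε e_{d_i})]]; and X_i(x) = lim_{ε→0} Q_i(x,ε), for i = 1,…,k. Then: (i) for all sufficiently small ε ≠ 0, Q_i(x̄,ε) ∈ M_{2^i n}(Ω, (i+1)m); and (ii) X_i(x̄) ∈ M_{2^i n}(Ω, (i+1)m), for i = 1,…,k. -/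
open Matrix Filter Asymptotics Topology

attribute [local instance] Matrix.frobeniusNormedAddCommGroup Matrix.frobeniusNormedSpace

open scoped Classical in
/-- The primary matrix function `f(A)`, defined (via Hermite interpolation) as `p(A)` for any
polynomial `p` matching the values and derivatives of `f` on the spectrum of `A` up to the
index of each eigenvalue; this coincides with the usual definition via the Jordan form. -/
noncomputable def matFun {N : Type*} [Fintype N] [DecidableEq N] (f : ℂ → ℂ)
    (A : Matrix N N ℂ) : Matrix N N ℂ :=
  if h : ∃ p : Polynomial ℂ, ∀ μ ∈ spectrum ℂ A, ∀ i < nuIdx A μ,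
      iteratedDeriv i (fun z => p.eval z) μ = iteratedDeriv i f μ
  then (Polynomial.aeval A) h.choose else 0

/-- Partial derivative in direction `d` of a function of `j` real variables. -/
noncomputable def pd {j : ℕ} {M : Type*} [NormedAddCommGroup M] [NormedSpace ℝ M]
    (d : Fin j) (A : (Fin j → ℝ) → M) : (Fin j → ℝ) → M :=
  fun x => fderiv ℝ A x (Pi.single d 1)

/-- Iterated partial derivative `∂^α` for a multi-index `α`. -/
noncomputable def mderiv {j : ℕ} {M : Type*} [NormedAddCommGroup M] [NormedSpace ℝ M]
    (α : Fin j → ℕ) (A : (Fin j → ℝ) → M) : (Fin j → ℝ) → M :=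
  ((List.finRange j).flatMap fun d => List.replicate (α d) d).foldr pd A

/-- Index type for the `2^i n × 2^i n` block matrices. -/
def Idx (n : ℕ) : ℕ → Type
  | 0 => Fin n
  | i + 1 => Idx n i ⊕ Idx n i

instance Idx.fintype (n : ℕ) : ∀ i, Fintype (Idx n i)
  | 0 => inferInstanceAs (Fintype (Fin n))
  | i + 1 => letI := Idx.fintype n i; inferInstanceAs (Fintype (Idx n i ⊕ Idx n i))

instance Idx.decEq (n : ℕ) : ∀ i, DecidableEq (Idx n i)
  | 0 => inferInstanceAs (DecidableEq (Fin n))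
  | i + 1 => letI := Idx.decEq n i; inferInstanceAs (DecidableEq (Idx n i ⊕ Idx n i))

/-- The recursive block upper triangular sequence `X_i(x)` of the paper. -/
noncomputable def Xseq {n j : ℕ} (A : (Fin j → ℝ) → Matrix (Fin n) (Fin n) ℂ) (d : ℕ → Fin j) :
    (i : ℕ) → (Fin j → ℝ) → Matrix (Idx n i) (Idx n i) ℂ
  | 0 => A
  | i + 1 => fun x =>
      Matrix.fromBlocks (Xseq A d i x) (pd (d i) (Xseq A d i) x) 0 (Xseq A d i x)

/-- The recursive block upper triangular sequence `F_i(x)` of the paper. -/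
noncomputable def Fseq {n j : ℕ} (f : ℂ → ℂ) (A : (Fin j → ℝ) → Matrix (Fin n) (Fin n) ℂ)
    (d : ℕ → Fin j) : (i : ℕ) → (Fin j → ℝ) → Matrix (Idx n i) (Idx n i) ℂ
  | 0 => fun x => matFun f (A x)
  | i + 1 => fun x =>
      Matrix.fromBlocks (Fseq f A d i x) (pd (d i) (Fseq f A d i) x) 0 (Fseq f A d i x)

/-- The finite difference block matrix `Q_i(x, ε)` of the paper, built from `X_{i-1}`. -/
noncomputable def Qof {n j i : ℕ} (Xi : (Fin j → ℝ) → Matrix (Idx n i) (Idx n i) ℂ)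
    (d : Fin j) (x : Fin j → ℝ) (ε : ℝ) : Matrix (Idx n (i + 1)) (Idx n (i + 1)) ℂ :=
  Matrix.fromBlocks (Xi x) (ε⁻¹ • (Xi (x + ε • (Pi.single d 1 : Fin j → ℝ)) - Xi x)) 0
    (Xi (x + ε • (Pi.single d 1 : Fin j → ℝ)))

/-- The sequence `X_i(x)` defined as the limit of `Q_i(x, ε)` for `ε → 0`, `ε ≠ 0`. -/
noncomputable def Xlim {n j : ℕ} (A : (Fin j → ℝ) → Matrix (Fin n) (Fin n) ℂ) (d : ℕ → Fin j) :
    (i : ℕ) → (Fin j → ℝ) → Matrix (Idx n i) (Idx n i) ℂ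
  | 0 => A
  | i + 1 => fun x => limUnder (𝓝[≠] (0 : ℝ)) (Qof (Xlim A d i) (d i) x)


/-! ### Auxiliary material for the proof -/

section MatCLE

variable {N : Type*} [Fintype N]

/-- The identity, as a continuous `ℝ`-linear equivalence between matrices (with the Frobenius
norm topology) and the pi type. -/
noncomputable def matCLE : Matrix N N ℂ ≃L[ℝ] (N → N → ℂ) :=
  LinearEquiv.toContinuousLinearEquiv
    { toFun := fun M => M, invFun := fun M => M,
      map_add' := fun _ _ => rfl, map_smul' := fun _ _ => rfl,
      left_inv := fun _ => rfl, right_inv := fun _ => rfl }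

theorem tendsto_matrix {α : Type*} {l : Filter α} {F : α → Matrix N N ℂ} {M : Matrix N N ℂ} :
    Filter.Tendsto F l (𝓝 M) ↔ ∀ r c, Filter.Tendsto (fun t => F t r c) l (𝓝 (M r c)) := by
  constructor
  · intro h r c
    exact (((continuous_apply c).comp (continuous_apply r)).comp
      (matCLE (N := N)).continuous).continuousAt.tendsto.comp h
  · intro h
    have h2 : Filter.Tendsto (fun t => matCLE (F t)) l (𝓝 (matCLE M)) := by
      rw [tendsto_pi_nhds]; intro r; rw [tendsto_pi_nhds]; intro c; exact h r c
    have h3 := ((matCLE (N := N)).symm.continuous.continuousAt.tendsto).comp h2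
    exact h3

theorem contDiffAt_matrix {j : ℕ} {ν : WithTop ℕ∞} {X : (Fin j → ℝ) → Matrix N N ℂ} {x : Fin j → ℝ} :
    ContDiffAt ℝ ν X x ↔ ∀ r c, ContDiffAt ℝ ν (fun y => X y r c) x := by
  constructor
  · intro h r c
    exact (((ContinuousLinearMap.proj c).comp ((ContinuousLinearMap.proj r).comp
      (matCLE (N := N)).toContinuousLinearMap)).contDiff.comp_contDiffAt x h :)
  · intro h
    have h2 : ContDiffAt ℝ ν (fun y => matCLE (X y)) x := by
      apply contDiffAt_pi.2; intro r; apply contDiffAt_pi.2; intro c; exact h r c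
    have h3 := (matCLE (N := N)).symm.contDiff.comp_contDiffAt x h2
    exact h3

/-- The entry extraction as a continuous linear map. -/
noncomputable def entryCLM (r c : N) : Matrix N N ℂ →L[ℝ] ℂ :=
  (ContinuousLinearMap.proj c).comp ((ContinuousLinearMap.proj r).comp
    (matCLE (N := N)).toContinuousLinearMap)

@[simp] lemma entryCLM_apply (r c : N) (M : Matrix N N ℂ) : entryCLM r c M = M r c := rfl

end MatCLE

section AlgCore

variable {N P : Type*} [Fintype N] [DecidableEq N] [Fintype P] [DecidableEq P]

lemma stab_prop {m : ℕ} {G : Matrix P P ℂ}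
    (h : ∀ u : P → ℂ, (G ^ (m+1)).mulVec u = 0 → (G ^ m).mulVec u = 0) :
    ∀ (c : ℕ) (u : P → ℂ), (G ^ (m+c)).mulVec u = 0 → (G ^ m).mulVec u = 0 := by
  intro c
  induction c with
  | zero => intro u hu; simpa using hu
  | succ c ih =>
    intro u hu
    apply ih
    have h1 : (G ^ (m+1)).mulVec ((G ^ c).mulVec u) = 0 := by
      rw [Matrix.mulVec_mulVec, ← pow_add]
      rw [show m + 1 + c = m + (c + 1) by omega]
      exact hu
    have := h _ h1
    rwa [Matrix.mulVec_mulVec, ← pow_add] at this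

lemma stab_mono {a b : ℕ} {G : Matrix P P ℂ} (hab : a ≤ b)
    (h : ∀ u : P → ℂ, (G ^ (a+1)).mulVec u = 0 → (G ^ a).mulVec u = 0) :
    ∀ u : P → ℂ, (G ^ (b+1)).mulVec u = 0 → (G ^ b).mulVec u = 0 := by
  intro u hu
  have h1 : (G ^ (a + (b+1-a))).mulVec u = 0 := by
    rw [show a + (b+1-a) = b+1 by omega]; exact hu
  have h2 := stab_prop h _ _ h1
  have : (G ^ (b-a)).mulVec ((G ^ a).mulVec u) = 0 := by
    rw [h2, Matrix.mulVec_zero]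
  rwa [Matrix.mulVec_mulVec, ← pow_add, show b - a + a = b by omega] at this

theorem key_lemma (M : Matrix N N ℂ) (G : Matrix P P ℂ)
    (w : N → ℕ) (π : N → P) (s : N → N → Prop)
    (hrefl : ∀ r, s r r) (hsymm : ∀ {r c}, s r c → s c r)
    (htrans : ∀ {a b c}, s a b → s b c → s a c)
    (hsw : ∀ {r c}, s r c → w r = w c)
    (hπinj : ∀ {r c}, s r c → π r = π c → r = c)
    (hπsurj : ∀ (r : N) (q : P), ∃ c, s r c ∧ π c = q)
    (h1 : ∀ r c, M r c ≠ 0 → s r c ∨ w r < w c)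
    (h2 : ∀ r c, s r c → M r c = G (π r) (π c))
    (p m : ℕ) (hw : ∀ r, w r < p)
    (hstab : ∀ (μ : ℂ) (u : P → ℂ),
      ((G - μ•1) ^ (m+1)).mulVec u = 0 → ((G - μ•1) ^ m).mulVec u = 0) :
    spectrum ℂ M ⊆ spectrum ℂ G ∧
    ∀ (μ : ℂ) (v : N → ℂ),
      ((M - μ•1) ^ (p*m+1)).mulVec v = 0 → ((M - μ•1) ^ (p*m)).mulVec v = 0 := by
  classical
  -- canonical class section
  choose σ hσs hσπ using hπsurj
  have hσ_unique : ∀ r c, s r c → σ r (π c) = c := by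
    intro r c hrc
    exact hπinj (htrans (hsymm (hσs r (π c))) hrc) (by rw [hσπ])
  have hσ_congr : ∀ r r', s r r' → ∀ q, σ r q = σ r' q := by
    intro r r' hrr' q
    exact hπinj (htrans (hsymm (hσs r q)) (htrans hrr' (hσs r' q)))
      (by rw [hσπ, hσπ])
  have hσ_self : ∀ r, σ r (π r) = r := fun r => hσ_unique r r (hrefl r)
  -- structural facts for M' = M - μ•1
  have h1' : ∀ (μ : ℂ) r c, (M - μ•1) r c ≠ 0 → s r c ∨ w r < w c := by
    intro μ r c hne
    by_cases hrc : r = c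
    · subst hrc; left; exact hrefl r
    · apply h1
      intro h0
      apply hne
      simp [Matrix.sub_apply, Matrix.smul_apply, Matrix.one_apply, hrc, h0]
  have h2' : ∀ (μ : ℂ) r c, s r c → (M - μ•1) r c = (G - μ•1) (π r) (π c) := by
    intro μ r c hrc
    have hiff : r = c ↔ π r = π c := ⟨fun h => by rw [h], hπinj hrc⟩
    simp only [Matrix.sub_apply, Matrix.smul_apply, Matrix.one_apply, h2 r c hrc]
    congr 1
    by_cases h : r = c
    · rw [if_pos h, if_pos (hiff.mp h)]
    · rw [if_neg h, if_neg (fun hh => h (hiff.mpr hh))]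
  -- support preservation
  have hsupp : ∀ (μ : ℂ) (t : ℕ) (v : N → ℂ), (∀ c, v c ≠ 0 → w c ≤ t) →
      ∀ r, ((M - μ•1).mulVec v) r ≠ 0 → w r ≤ t := by
    intro μ t v hv r hr
    rw [Matrix.mulVec, dotProduct] at hr
    obtain ⟨c, _, hc⟩ := Finset.exists_ne_zero_of_sum_ne_zero hr
    have hM := left_ne_zero_of_mul hc
    have hvc := right_ne_zero_of_mul hc
    rcases h1' μ r c hM with h | h
    · rw [hsw h]; exact hv c hvc
    · exact le_of_lt (lt_of_lt_of_le h (hv c hvc))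
  have hsupp_pow : ∀ (μ : ℂ) (k : ℕ) (t : ℕ) (v : N → ℂ), (∀ c, v c ≠ 0 → w c ≤ t) →
      ∀ r, (((M - μ•1) ^ k).mulVec v) r ≠ 0 → w r ≤ t := by
    intro μ k
    induction k with
    | zero => intro t v hv r hr; rw [pow_zero, Matrix.one_mulVec] at hr; exact hv r hr
    | succ k ih =>
      intro t v hv r hr
      rw [pow_succ', ← Matrix.mulVec_mulVec] at hr
      exact hsupp μ t _ (ih t v hv) r hr
  -- the class formula for one application
  have hclass : ∀ (μ : ℂ) (t : ℕ) (v : N → ℂ), (∀ c, v c ≠ 0 → w c ≤ t) →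
      ∀ r, w r = t → ∀ q, ((M - μ•1).mulVec v) (σ r q) =
        ((G - μ•1).mulVec (v ∘ σ r)) q := by
    intro μ t v hv r hrt q
    set r' := σ r q with hr'
    have hsr' : s r r' := hσs r q
    have hπr' : π r' = q := hσπ r q
    have hwr' : w r' = t := by rw [← hsw hsr']; exact hrt
    rw [Matrix.mulVec, dotProduct]
    have step1 : ∀ c, (M - μ•1) r' c * v c =
        if s r' c then (G - μ•1) (π r') (π c) * v c else 0 := by
      intro c
      by_cases hc : s r' c
      · rw [if_pos hc, h2' μ r' c hc]
      · rw [if_neg hc]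
        by_cases hMc : (M - μ•1) r' c = 0
        · rw [hMc, zero_mul]
        · by_cases hvc : v c = 0
          · rw [hvc, mul_zero]
          · exfalso
            rcases h1' μ r' c hMc with h | h
            · exact hc h
            · have := hv c hvc; omega
    rw [Finset.sum_congr rfl (fun c _ => step1 c), Finset.sum_ite, Finset.sum_const_zero,
      add_zero]
    rw [Matrix.mulVec, dotProduct]
    apply Finset.sum_nbij' (i := fun c => π c) (j := fun q' => σ r' q')
    · intro a ha; exact Finset.mem_univ _
    · intro a ha
      simp only [Finset.mem_filter]
      exact ⟨Finset.mem_univ _, hσs r' a⟩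
    · intro a ha
      simp only [Finset.mem_filter] at ha
      exact hσ_unique r' a ha.2
    · intro a ha; exact hσπ r' a
    · intro a ha
      simp only [Finset.mem_filter] at ha
      rw [hπr', Function.comp_apply, hσ_congr r r' hsr' (π a), hσ_unique r' a ha.2]
  -- iterated class formula
  have hclass_pow : ∀ (μ : ℂ) (k : ℕ) (t : ℕ) (v : N → ℂ), (∀ c, v c ≠ 0 → w c ≤ t) →
      ∀ r, w r = t → ∀ q, (((M - μ•1) ^ k).mulVec v) (σ r q) =
        (((G - μ•1) ^ k).mulVec (v ∘ σ r)) q := by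
    intro μ k
    induction k with
    | zero =>
      intro t v hv r hrt q
      rw [pow_zero, pow_zero, Matrix.one_mulVec, Matrix.one_mulVec]
      rfl
    | succ k ih =>
      intro t v hv r hrt q
      rw [pow_succ', pow_succ', ← Matrix.mulVec_mulVec, ← Matrix.mulVec_mulVec]
      have hsupp' : ∀ c, (((M - μ•1) ^ k).mulVec v) c ≠ 0 → w c ≤ t :=
        hsupp_pow μ k t v hv
      rw [hclass μ t _ hsupp' r hrt q]
      congr 1
      funext q'
      exact ih t v hv r hrt q'
  constructor
  · -- spectrum inclusion
    intro μ hμ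
    by_contra hμG
    rw [spectrum.notMem_iff] at hμG
    have hGu : IsUnit (G - μ•1) := by
      have : (G - μ•1) = -((algebraMap ℂ (Matrix P P ℂ)) μ - G) := by
        rw [Algebra.algebraMap_eq_smul_one, neg_sub]
      rw [this]; exact hμG.neg
    have hGinj := Matrix.mulVec_injective_iff_isUnit.mpr hGu
    -- show M - μ•1 has injective mulVec
    have hMinj : ∀ v : N → ℂ, (M - μ•1).mulVec v = 0 → v = 0 := by
      intro v hv
      by_contra hv0
      obtain ⟨c₀, hc₀⟩ : ∃ c, v c ≠ 0 := by
        by_contra h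
        push_neg at h
        exact hv0 (funext h)
      set S : Finset N := Finset.univ.filter (fun c => v c ≠ 0) with hS
      have hSne : S.Nonempty := ⟨c₀, by simp [hS, hc₀]⟩
      have hSim : (S.image w).Nonempty := hSne.image w
      set t := (S.image w).max' hSim with ht
      obtain ⟨r₀, hr₀S, hr₀w⟩ := Finset.mem_image.mp ((S.image w).max'_mem hSim)
      have hvt : ∀ c, v c ≠ 0 → w c ≤ t :=
        fun c hc => (S.image w).le_max' _ (Finset.mem_image_of_mem w (by simp [hS, hc]))
      have : (G - μ•1).mulVec (v ∘ σ r₀) = 0 := by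
        funext q
        rw [← hclass μ t v hvt r₀ hr₀w q, hv]
        rfl
      have hv0' : v ∘ σ r₀ = 0 := by
        apply hGinj
        rw [this, Matrix.mulVec_zero]
      have : v r₀ = 0 := by
        have := congrFun hv0' (π r₀)
        rwa [Function.comp_apply, hσ_self r₀] at this
      rw [hS] at hr₀S
      simp only [Finset.mem_filter] at hr₀S
      exact hr₀S.2 this
    have : IsUnit ((algebraMap ℂ (Matrix N N ℂ)) μ - M) := by
      have heq : (algebraMap ℂ (Matrix N N ℂ)) μ - M = -(M - μ•1) := by
        rw [Algebra.algebraMap_eq_smul_one, neg_sub]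
      rw [heq]
      apply IsUnit.neg
      apply Matrix.mulVec_injective_iff_isUnit.mp
      intro a b hab
      have : (M - μ•1).mulVec (a - b) = 0 := by
        rw [Matrix.mulVec_sub, hab, sub_self]
      have := hMinj _ this
      exact sub_eq_zero.mp this
    exact (spectrum.notMem_iff.mpr this) hμ
  · -- kernel stabilization
    intro μ
    have claim : ∀ t : ℕ, ∀ v : N → ℂ, (∀ c, v c ≠ 0 → w c < t) →
        ((M - μ•1) ^ (t*m+1)).mulVec v = 0 → ((M - μ•1) ^ (t*m)).mulVec v = 0 := by
      intro t
      induction t with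
      | zero =>
        intro v hv _
        have : v = 0 := by
          funext c
          by_contra hc
          exact Nat.not_lt_zero _ (hv c hc)
        rw [this, Matrix.mulVec_zero]
      | succ t ih =>
        intro v hv h0
        set v₁ : N → ℂ := ((M - μ•1) ^ m).mulVec v with hv₁
        have hvle : ∀ c, v c ≠ 0 → w c ≤ t := fun c hc => Nat.lt_succ_iff.mp (hv c hc)
        have hsupp₁ : ∀ c, v₁ c ≠ 0 → w c < t := by
          intro c hc
          have hle : w c ≤ t := hsupp_pow μ m t v hvle c hc
          rcases lt_or_eq_of_le hle with h | h
          · exact h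
          · exfalso
            apply hc
            have hform := hclass_pow μ m t v hvle c h
            have hbig : ((G - μ•1) ^ (m + (t*m+1))).mulVec (v ∘ σ c) = 0 := by
              funext q
              rw [← hclass_pow μ (m + (t*m+1)) t v hvle c h q]
              have : m + (t*m+1) = (t+1)*m+1 := by ring
              rw [this, h0]
              rfl
            have hsm := stab_prop (hstab μ) (t*m+1) _ hbig
            have : v₁ c = (((G - μ•1) ^ m).mulVec (v ∘ σ c)) (π c) := by
              rw [hv₁, ← hform (π c), hσ_self c]
            rw [this, hsm]
            rfl
        have hcomp : ∀ k : ℕ, ((M - μ•1) ^ k).mulVec v₁ = ((M - μ•1) ^ (k+m)).mulVec v := by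
          intro k
          rw [hv₁, Matrix.mulVec_mulVec, ← pow_add]
        have h1' : ((M - μ•1) ^ (t*m+1)).mulVec v₁ = 0 := by
          rw [hcomp]
          have : t*m+1+m = (t+1)*m+1 := by ring
          rw [this, h0]
        have := ih v₁ hsupp₁ h1'
        rw [hcomp] at this
        have heq : t*m+m = (t+1)*m := by ring
        rwa [heq] at this
    intro v hv
    exact claim p v (fun c _ => hw c) hv


end AlgCore

section Glue

variable {N P : Type*} [Fintype N] [DecidableEq N] [Fintype P] [DecidableEq P]

lemma mulVecLin_pow (A : Matrix N N ℂ) (k : ℕ) :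
    (A ^ k).mulVecLin = (A.mulVecLin) ^ k := by
  induction k with
  | zero => simp [Matrix.mulVecLin_one, Module.End.one_eq_id]
  | succ k ih => rw [pow_succ, pow_succ, Matrix.mulVecLin_mul, ih]; rfl

/-- `jordanBound G ≤ m` gives one-step kernel stabilization at `m`, for every `μ`. -/
lemma stab_of_jordan {G : Matrix P P ℂ} {m : ℕ} (h : jordanBound G ≤ m) :
    ∀ (μ : ℂ) (u : P → ℂ), ((G - μ•1) ^ (m+1)).mulVec u = 0 → ((G - μ•1) ^ m).mulVec u = 0 := by
  intro μ u hu
  by_cases hμ : μ ∈ spectrum ℂ G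
  · -- ν := nuIdx G μ stabilizes kernels, ν ≤ m
    set f := (G - μ•1).mulVecLin with hf
    have hseteq : {k : ℕ | LinearMap.ker (((G - μ • 1) ^ k).mulVecLin) =
        LinearMap.ker (((G - μ • 1) ^ (k + 1)).mulVecLin)} =
        {k : ℕ | LinearMap.ker (f ^ k) = LinearMap.ker (f ^ (k + 1))} := by
      ext k; simp only [Set.mem_setOf_eq, mulVecLin_pow, hf]
    have hne : {k : ℕ | LinearMap.ker (f ^ k) = LinearMap.ker (f ^ (k + 1))}.Nonempty := by
      obtain ⟨a, ha⟩ := Filter.eventually_atTop.mp f.eventually_iSup_ker_pow_eq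
      exact ⟨a, by rw [Set.mem_setOf_eq, ← ha a le_rfl, ← ha (a+1) (by omega)]⟩
    have hν' : nuIdx G μ = sInf {k : ℕ | LinearMap.ker (f ^ k) = LinearMap.ker (f ^ (k + 1))} := by
      rw [nuIdx, hseteq]
    set ν := sInf {k : ℕ | LinearMap.ker (f ^ k) = LinearMap.ker (f ^ (k + 1))} with hν
    have hmem := Nat.sInf_mem hne
    rw [Set.mem_setOf_eq] at hmem
    have hνm : ν ≤ m := by
      rw [← hν']
      refine le_trans ?_ h
      apply le_csSup ((Matrix.finite_spectrum G).image _).bddAbove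
      exact Set.mem_image_of_mem _ hμ
    have hconst := Module.End.ker_pow_constant hmem
    have h1 : LinearMap.ker (f ^ (m+1)) = LinearMap.ker (f ^ ν) := by
      have h' := hconst (m+1-ν)
      rw [← hν] at h'
      rw [show m + 1 = ν + (m+1-ν) by omega]
      exact h'.symm
    have h2 : LinearMap.ker (f ^ m) = LinearMap.ker (f ^ ν) := by
      have h' := hconst (m-ν)
      rw [← hν] at h'
      rw [show m = ν + (m-ν) by omega]
      exact h'.symm
    have hu' : u ∈ LinearMap.ker (f ^ (m+1)) := by
      rw [hf, LinearMap.mem_ker, ← mulVecLin_pow]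
      exact hu
    rw [h1, ← h2, hf, LinearMap.mem_ker, ← mulVecLin_pow] at hu'
    exact hu'
  · rw [spectrum.notMem_iff] at hμ
    have hGu : IsUnit (G - μ•1) := by
      rw [show (G - μ•1) = -((algebraMap ℂ (Matrix P P ℂ)) μ - G) by
        rw [Algebra.algebraMap_eq_smul_one, neg_sub]]
      exact hμ.neg
    have : u = 0 := by
      apply Matrix.mulVec_injective_iff_isUnit.mpr (hGu.pow (m+1))
      rw [hu, Matrix.mulVec_zero]
    rw [this, Matrix.mulVec_zero]

lemma jordan_le_of_stab {M : Matrix N N ℂ} {T : ℕ}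
    (h : ∀ (μ : ℂ) (v : N → ℂ),
      ((M - μ•1) ^ (T+1)).mulVec v = 0 → ((M - μ•1) ^ T).mulVec v = 0) :
    jordanBound M ≤ T := by
  apply csSup_le'
  rintro b ⟨μ, hμ, rfl⟩
  apply Nat.sInf_le
  simp only [Set.mem_setOf_eq, mulVecLin_pow]
  apply le_antisymm
  · intro x hx
    rw [LinearMap.mem_ker] at hx ⊢
    rw [pow_succ', Module.End.mul_apply, hx, map_zero]
  · intro x hx
    rw [LinearMap.mem_ker, ← mulVecLin_pow] at hx ⊢
    exact h μ x hx


end Glue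

section Conj

variable {N : Type*} [Fintype N] [DecidableEq N]
variable {L R : Type*} [Fintype L] [DecidableEq L] [Fintype R] [DecidableEq R]

lemma myConjPow {T Ti D : Matrix N N ℂ} (hT : T * Ti = 1) (hTi : Ti * T = 1) (k : ℕ) :
    (T * D * Ti) ^ k = T * D ^ k * Ti := by
  induction k with
  | zero => rw [pow_zero, pow_zero, Matrix.mul_one, hT]
  | succ k ih =>
    rw [pow_succ, pow_succ, ih]
    have : T * D ^ k * Ti * (T * D * Ti) = T * (D ^ k * D) * Ti := by
      simp only [Matrix.mul_assoc]
      rw [← Matrix.mul_assoc Ti T, hTi, Matrix.one_mul]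
    rw [this]

lemma myConjSubSmul {T Ti D : Matrix N N ℂ} (hT : T * Ti = 1) (μ : ℂ) :
    T * D * Ti - μ • 1 = T * (D - μ • 1) * Ti := by
  rw [Matrix.mul_sub, Matrix.sub_mul]
  congr 1
  rw [Matrix.mul_smul, Matrix.smul_mul, Matrix.mul_one, hT]

lemma myIsUnitConj {T Ti D : Matrix N N ℂ} (hT : T * Ti = 1) (hTi : Ti * T = 1)
    (hD : IsUnit D) : IsUnit (T * D * Ti) := by
  obtain ⟨u, hu⟩ := hD
  set Tu : (Matrix N N ℂ)ˣ := ⟨T, Ti, hT, hTi⟩ with hTu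
  refine ⟨Tu * u * Tu⁻¹, ?_⟩
  simp only [Units.val_mul, hTu]
  rw [hu]
  rfl

lemma mySpectrumConj {T Ti D : Matrix N N ℂ} (hT : T * Ti = 1) (hTi : Ti * T = 1) :
    spectrum ℂ (T * D * Ti) ⊆ spectrum ℂ D := by
  intro μ hμ
  by_contra hD
  rw [spectrum.notMem_iff] at hD
  apply (spectrum.notMem_iff.mpr _) hμ
  rw [Algebra.algebraMap_eq_smul_one] at hD ⊢
  have heq : μ • (1 : Matrix N N ℂ) - T * D * Ti = T * (μ • 1 - D) * Ti := by
    rw [Matrix.mul_sub, Matrix.sub_mul]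
    congr 1
    rw [Matrix.mul_smul, Matrix.smul_mul, Matrix.mul_one, hT]
  rw [heq]
  exact myIsUnitConj hT hTi hD

lemma myStabConj {T Ti D : Matrix N N ℂ} (hT : T * Ti = 1) (hTi : Ti * T = 1) {a : ℕ}
    (h : ∀ (μ : ℂ) (v : N → ℂ),
      ((D - μ•1) ^ (a+1)).mulVec v = 0 → ((D - μ•1) ^ a).mulVec v = 0) :
    ∀ (μ : ℂ) (v : N → ℂ),
      ((T * D * Ti - μ•1) ^ (a+1)).mulVec v = 0 → ((T * D * Ti - μ•1) ^ a).mulVec v = 0 := by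
  intro μ v hv
  rw [myConjSubSmul hT, myConjPow hT hTi] at hv ⊢
  have h0 : ((D - μ•1) ^ (a+1)).mulVec (Ti.mulVec v) = 0 := by
    have h2 := congrArg (fun z => Ti.mulVec z) hv
    simp only [Matrix.mulVec_mulVec, Matrix.mulVec_zero] at h2
    rw [← Matrix.mul_assoc, ← Matrix.mul_assoc, hTi, Matrix.one_mul] at h2
    rw [← Matrix.mulVec_mulVec] at h2
    exact h2
  rw [← Matrix.mulVec_mulVec, ← Matrix.mulVec_mulVec, h _ _ h0, Matrix.mulVec_zero]

lemma myBlockDiagPow (X : Matrix L L ℂ) (Y : Matrix R R ℂ) (k : ℕ) :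
    (Matrix.fromBlocks X 0 0 Y) ^ k = Matrix.fromBlocks (X ^ k) 0 0 (Y ^ k) := by
  induction k with
  | zero => simp [Matrix.fromBlocks_one]
  | succ k ih => rw [pow_succ, ih, Matrix.fromBlocks_multiply]; simp [← pow_succ]

lemma mySmulOneSubBlockDiag (X : Matrix L L ℂ) (Y : Matrix R R ℂ) (μ : ℂ) :
    μ • (1 : Matrix (L ⊕ R) (L ⊕ R) ℂ) - Matrix.fromBlocks X 0 0 Y =
      Matrix.fromBlocks (μ • 1 - X) 0 0 (μ • 1 - Y) := by
  ext (r | r) (c | c) <;>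
    simp [Matrix.sub_apply, Matrix.smul_apply, Matrix.one_apply, Matrix.fromBlocks]

lemma myBlockDiagSubSmul (X : Matrix L L ℂ) (Y : Matrix R R ℂ) (μ : ℂ) :
    Matrix.fromBlocks X 0 0 Y - μ • (1 : Matrix (L ⊕ R) (L ⊕ R) ℂ) =
      Matrix.fromBlocks (X - μ • 1) 0 0 (Y - μ • 1) := by
  ext (r | r) (c | c) <;>
    simp [Matrix.sub_apply, Matrix.smul_apply, Matrix.one_apply, Matrix.fromBlocks]

lemma mySpectrumBlockDiag (X : Matrix L L ℂ) (Y : Matrix R R ℂ) :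
    spectrum ℂ (Matrix.fromBlocks X 0 0 Y) ⊆ spectrum ℂ X ∪ spectrum ℂ Y := by
  intro μ hμ
  by_contra hc
  obtain ⟨h1, h2⟩ : μ ∉ spectrum ℂ X ∧ μ ∉ spectrum ℂ Y := by
    constructor <;> intro h <;> simp [h] at hc
  rw [spectrum.notMem_iff] at h1 h2
  apply spectrum.notMem_iff.mpr _ hμ
  rw [Algebra.algebraMap_eq_smul_one] at h1 h2 ⊢
  obtain ⟨u, hu⟩ := h1
  obtain ⟨w, hw⟩ := h2
  refine isUnit_iff_exists.mpr ⟨Matrix.fromBlocks ((u⁻¹ : (Matrix L L ℂ)ˣ) : Matrix L L ℂ) 0 0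
    ((w⁻¹ : (Matrix R R ℂ)ˣ) : Matrix R R ℂ), ?_, ?_⟩ <;>
  · rw [mySmulOneSubBlockDiag, Matrix.fromBlocks_multiply]
    simp only [Matrix.mul_zero, Matrix.zero_mul, add_zero, zero_add, ← hu, ← hw,
      Units.mul_inv, Units.inv_mul, Matrix.fromBlocks_one]

lemma myStabBlockDiag {X : Matrix L L ℂ} {Y : Matrix R R ℂ} {a : ℕ}
    (hX : ∀ (μ : ℂ) (v : L → ℂ),
      ((X - μ•1) ^ (a+1)).mulVec v = 0 → ((X - μ•1) ^ a).mulVec v = 0)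
    (hY : ∀ (μ : ℂ) (v : R → ℂ),
      ((Y - μ•1) ^ (a+1)).mulVec v = 0 → ((Y - μ•1) ^ a).mulVec v = 0) :
    ∀ (μ : ℂ) (v : L ⊕ R → ℂ),
      ((Matrix.fromBlocks X 0 0 Y - μ•1) ^ (a+1)).mulVec v = 0 →
        ((Matrix.fromBlocks X 0 0 Y - μ•1) ^ a).mulVec v = 0 := by
  intro μ v hv
  rw [myBlockDiagSubSmul, myBlockDiagPow] at hv ⊢
  rw [Matrix.fromBlocks_mulVec] at hv ⊢
  simp only [Matrix.zero_mulVec, add_zero, zero_add] at hv ⊢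
  have h1 : ((X - μ•1) ^ (a+1)).mulVec (v ∘ Sum.inl) = 0 := by
    funext r; exact congrFun hv (Sum.inl r)
  have h2 : ((Y - μ•1) ^ (a+1)).mulVec (v ∘ Sum.inr) = 0 := by
    funext r; exact congrFun hv (Sum.inr r)
  funext r
  cases r with
  | inl r => rw [Sum.elim_inl, hX _ _ h1]; rfl
  | inr r => rw [Sum.elim_inr, hY _ _ h2]; rfl


end Conj

/-- weight of an index: number of `inr`s in the chain -/
def wIdx {n : ℕ} : ∀ {i : ℕ}, Idx n i → ℕ
  | 0, _ => 0
  | _ + 1, Sum.inl a => wIdx a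
  | _ + 1, Sum.inr a => wIdx a + 1

/-- base projection -/
def pIdx {n : ℕ} : ∀ {i : ℕ}, Idx n i → Fin n
  | 0, a => a
  | _ + 1, Sum.inl a => pIdx a
  | _ + 1, Sum.inr a => pIdx a

/-- same slot relation -/
def slotEq {n : ℕ} : ∀ {i : ℕ}, Idx n i → Idx n i → Prop
  | 0, _, _ => True
  | _ + 1, Sum.inl a, Sum.inl b => slotEq a b
  | _ + 1, Sum.inr a, Sum.inr b => slotEq a b
  | _ + 1, _, _ => False

lemma slotEq_refl {n : ℕ} : ∀ {i : ℕ} (r : Idx n i), slotEq r r := by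
  intro i
  induction i with
  | zero => intro r; trivial
  | succ i ih => intro r; cases r with
    | inl a => exact ih a
    | inr a => exact ih a

lemma slotEq_symm {n : ℕ} : ∀ {i : ℕ} {r c : Idx n i}, slotEq r c → slotEq c r := by
  intro i
  induction i with
  | zero => intro r c _; trivial
  | succ i ih =>
    intro r c h
    cases r <;> cases c <;> first | exact ih h | exact h.elim

lemma slotEq_trans {n : ℕ} : ∀ {i : ℕ} {a b c : Idx n i}, slotEq a b → slotEq b c → slotEq a c := by
  intro i
  induction i with
  | zero => intro a b c _ _; trivial
  | succ i ih =>
    intro a b c h1 h2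
    cases a <;> cases b <;> cases c <;> first | exact ih h1 h2 | exact h1.elim | exact h2.elim

lemma slotEq_w {n : ℕ} : ∀ {i : ℕ} {r c : Idx n i}, slotEq r c → wIdx r = wIdx c := by
  intro i
  induction i with
  | zero => intro r c _; rfl
  | succ i ih =>
    intro r c h
    cases r <;> cases c <;> first
      | exact ih h
      | exact h.elim
      | (show wIdx _ + 1 = wIdx _ + 1; rw [ih h])

lemma slotEq_p_inj {n : ℕ} :
    ∀ {i : ℕ} {r c : Idx n i}, slotEq r c → pIdx r = pIdx c → r = c := by
  intro i
  induction i with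
  | zero => intro r c _ h; exact h
  | succ i ih =>
    intro r c h hp
    cases r <;> cases c <;> first
      | exact h.elim
      | (rw [ih h hp])

lemma slotEq_p_surj {n : ℕ} :
    ∀ {i : ℕ} (r : Idx n i) (q : Fin n), ∃ c, slotEq r c ∧ pIdx c = q := by
  intro i
  induction i with
  | zero => intro r q; exact ⟨q, trivial, rfl⟩
  | succ i ih =>
    intro r q
    cases r with
    | inl a => obtain ⟨c, h1, h2⟩ := ih a q; exact ⟨Sum.inl c, h1, h2⟩
    | inr a => obtain ⟨c, h1, h2⟩ := ih a q; exact ⟨Sum.inr c, h1, h2⟩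

lemma wIdx_lt {n : ℕ} : ∀ {i : ℕ} (r : Idx n i), wIdx r < i + 1 := by
  intro i
  induction i with
  | zero => intro r; simp [wIdx]
  | succ i ih =>
    intro r
    cases r with
    | inl a => exact lt_trans (ih a) (by omega)
    | inr a => have := ih a; show wIdx a + 1 < i + 2; omega


/-- The structural invariant of the matrices `X_i(x)`. -/
def SInv {n : ℕ} (i : ℕ) (X : Matrix (Idx n i) (Idx n i) ℂ)
    (B : Matrix (Fin n) (Fin n) ℂ) : Prop :=
  (∀ r c : Idx n i, ¬ slotEq r c → ¬ wIdx r < wIdx c → X r c = 0) ∧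
  (∀ r c : Idx n i, slotEq r c → X r c = B (pIdx r) (pIdx c))

lemma SInv_spec_stab {n i mm : ℕ} {X : Matrix (Idx n i) (Idx n i) ℂ}
    {B : Matrix (Fin n) (Fin n) ℂ} (hS : SInv i X B) (hB : jordanBound B ≤ mm) :
    spectrum ℂ X ⊆ spectrum ℂ B ∧
    ∀ (μ : ℂ) (v : Idx n i → ℂ), ((X - μ•1) ^ ((i+1)*mm+1)).mulVec v = 0 →
      ((X - μ•1) ^ ((i+1)*mm)).mulVec v = 0 := by
  have h1' : ∀ r c : Idx n i, X r c ≠ 0 → slotEq r c ∨ wIdx r < wIdx c := by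
    intro r c h
    by_contra hc
    push_neg at hc
    exact h (hS.1 r c hc.1 (not_lt.mpr hc.2))
  exact key_lemma X B wIdx pIdx slotEq slotEq_refl slotEq_symm slotEq_trans slotEq_w
    slotEq_p_inj slotEq_p_surj h1' hS.2 (i+1) mm wIdx_lt (stab_of_jordan hB)

section PD
variable {N : Type*} [Fintype N] {j : ℕ}

lemma pd_entry {X : (Fin j → ℝ) → Matrix N N ℂ} {x : Fin j → ℝ} (d : Fin j)
    (hX : DifferentiableAt ℝ X x) (r c : N) :
    pd d X x r c = pd d (fun y => X y r c) x := by
  have h1 : HasFDerivAt (fun y => entryCLM r c (X y))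
      ((entryCLM r c).comp (fderiv ℝ X x)) x :=
    (entryCLM r c).hasFDerivAt.comp x hX.hasFDerivAt
  have h2 : fderiv ℝ (fun y => X y r c) x = (entryCLM r c).comp (fderiv ℝ X x) := by
    have := h1.fderiv
    simpa using this
  rw [pd, pd, h2, ContinuousLinearMap.comp_apply, entryCLM_apply]
  rfl

lemma pd_entry_zero {X : (Fin j → ℝ) → Matrix N N ℂ} {x : Fin j → ℝ} (d : Fin j)
    (hX : DifferentiableAt ℝ X x) (r c : N)
    (h0 : ∀ᶠ y in 𝓝 x, X y r c = 0) : pd d X x r c = 0 := by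
  rw [pd_entry d hX r c, pd]
  have : fderiv ℝ (fun y => X y r c) x = fderiv ℝ (fun _ => (0:ℂ)) x :=
    Filter.EventuallyEq.fderiv_eq h0
  rw [this, fderiv_fun_const]
  rfl
end PD

section QTendsto

variable {n j : ℕ}

lemma Qof_tendsto {i : ℕ} {X : (Fin j → ℝ) → Matrix (Idx n i) (Idx n i) ℂ} {x : Fin j → ℝ}
    (dd : Fin j) (hX : DifferentiableAt ℝ X x) :
    Filter.Tendsto (Qof X dd x) (𝓝[≠] (0:ℝ))
      (𝓝 (Matrix.fromBlocks (X x) (pd dd X x) 0 (X x))) := by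
  have hline : Filter.Tendsto (fun ε : ℝ => x + ε • (Pi.single dd 1 : Fin j → ℝ))
      (𝓝[≠] (0:ℝ)) (𝓝 x) := by
    have hc : Continuous (fun ε : ℝ => x + ε • (Pi.single dd 1 : Fin j → ℝ)) := by
      exact continuous_const.add (continuous_id.smul continuous_const)
    have := hc.continuousAt (x := (0:ℝ))
    rw [ContinuousAt] at this
    simp only [zero_smul, add_zero] at this
    exact this.mono_left nhdsWithin_le_nhds
  apply tendsto_matrix.mpr
  intro r c
  cases r with
  | inl a =>
    cases c with
    | inl b =>
      simp only [Qof, Matrix.fromBlocks_apply₁₁]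
      exact tendsto_const_nhds
    | inr b =>
      simp only [Qof, Matrix.fromBlocks_apply₁₂, Matrix.smul_apply, Matrix.sub_apply]
      have hentry : DifferentiableAt ℝ (fun y => X y a b) x := by
        have h1 : HasFDerivAt (fun y => entryCLM a b (X y))
            ((entryCLM a b).comp (fderiv ℝ X x)) x :=
          (entryCLM a b).hasFDerivAt.comp x hX.hasFDerivAt
        exact h1.differentiableAt
      have hL : HasLineDerivAt ℝ (fun y => X y a b)
          (fderiv ℝ (fun y => X y a b) x (Pi.single dd 1)) x (Pi.single dd 1) :=
        hentry.hasFDerivAt.hasLineDerivAt _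
      have h4 := hL.tendsto_slope_zero
      have h5 : pd dd X x a b = fderiv ℝ (fun y => X y a b) x (Pi.single dd 1) := by
        rw [pd_entry dd hX a b]; rfl
      rw [h5]
      exact h4
  | inr a =>
    cases c with
    | inl b =>
      simp only [Qof, Matrix.fromBlocks_apply₂₁, Matrix.zero_apply]
      exact tendsto_const_nhds
    | inr b =>
      simp only [Qof, Matrix.fromBlocks_apply₂₂]
      have hcont : Filter.Tendsto (fun εy : Fin j → ℝ => X εy a b) (𝓝 x) (𝓝 (X x a b)) := by
        have h1 : ContinuousAt X x := hX.continuousAt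
        exact (tendsto_matrix.mp h1.tendsto) a b
      exact hcont.comp hline

end QTendsto


@[simp] lemma wIdx_inl {n i : ℕ} (a : Idx n i) :
    wIdx (n := n) (i := i+1) (Sum.inl a) = wIdx a := rfl
@[simp] lemma wIdx_inr {n i : ℕ} (a : Idx n i) :
    wIdx (n := n) (i := i+1) (Sum.inr a) = wIdx a + 1 := rfl
@[simp] lemma pIdx_inl {n i : ℕ} (a : Idx n i) :
    pIdx (n := n) (i := i+1) (Sum.inl a) = pIdx a := rfl
@[simp] lemma pIdx_inr {n i : ℕ} (a : Idx n i) :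
    pIdx (n := n) (i := i+1) (Sum.inr a) = pIdx a := rfl
@[simp] lemma slotEq_inl_inl {n i : ℕ} (a b : Idx n i) :
    slotEq (n := n) (i := i+1) (Sum.inl a) (Sum.inl b) = slotEq a b := rfl
@[simp] lemma slotEq_inr_inr {n i : ℕ} (a b : Idx n i) :
    slotEq (n := n) (i := i+1) (Sum.inr a) (Sum.inr b) = slotEq a b := rfl
@[simp] lemma slotEq_inl_inr {n i : ℕ} (a b : Idx n i) :
    slotEq (n := n) (i := i+1) (Sum.inl a) (Sum.inr b) = False := rfl
@[simp] lemma slotEq_inr_inl {n i : ℕ} (a b : Idx n i) :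
    slotEq (n := n) (i := i+1) (Sum.inr a) (Sum.inl b) = False := rfl

/-- The main inductive invariant: near `x̄`, `X_i` is `k - i` times differentiable and has the
weight/slot block structure with base matrix `A x`. -/
lemma good_main {n j k : ℕ} (A : (Fin j → ℝ) → Matrix (Fin n) (Fin n) ℂ)
    (xbar : Fin j → ℝ) (d : ℕ → Fin j)
    (hA : ∀ᶠ x in 𝓝 xbar, ContDiffAt ℝ k A x) :
    ∀ i, i ≤ k → ∀ᶠ x in 𝓝 xbar,
      ContDiffAt ℝ (k - i : ℕ) (Xlim A d i) x ∧ SInv i (Xlim A d i x) (A x) := by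
  intro i
  induction i with
  | zero =>
    intro _
    apply hA.mono
    intro x hx
    refine ⟨by simp only [Nat.sub_zero]; exact hx, ?_, ?_⟩
    · intro r c hs _
      exact absurd trivial hs
    · intro r c _
      rfl
  | succ i ih =>
    intro hik
    have hGi := ih (by omega)
    have hkk : 1 ≤ k - i := by omega
    have h1 : (1:WithTop ℕ∞) ≤ ((k - i : ℕ) : WithTop ℕ∞) := by exact_mod_cast hkk
    apply (hGi.and hGi.eventually_nhds).mono
    rintro x ⟨hx0, hx⟩
    have hXc : ContDiffAt ℝ ((k - i : ℕ):WithTop ℕ∞) (Xlim A d i) x := by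
      exact_mod_cast hx0.1
    have hd : DifferentiableAt ℝ (Xlim A d i) x := hXc.differentiableAt (lt_of_lt_of_le zero_lt_one h1).ne'
    have hlim : ∀ᶠ y in 𝓝 x, Xlim A d (i+1) y =
        Matrix.fromBlocks (Xlim A d i y) (pd (d i) (Xlim A d i) y) 0 (Xlim A d i y) := by
      apply hx.mono
      intro y hy
      have hdy : DifferentiableAt ℝ (Xlim A d i) y := hy.1.differentiableAt (lt_of_lt_of_le zero_lt_one h1).ne'
      exact (Qof_tendsto (d i) hdy).limUnder_eq
    have hle : ((k - (i+1) : ℕ) : WithTop ℕ∞) ≤ ((k - i : ℕ) : WithTop ℕ∞) := by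
      have : k - (i+1) ≤ k - i := by omega
      exact_mod_cast this
    constructor
    · -- smoothness
      have hcast : ((k - (i+1) : ℕ) : WithTop ℕ∞) + 1 ≤ ((k - i : ℕ) : WithTop ℕ∞) := by
        have heq : (k - (i+1)) + 1 ≤ k - i := by omega
        exact_mod_cast heq
      have hpdc : ContDiffAt ℝ ((k-(i+1):ℕ) : WithTop ℕ∞) (pd (d i) (Xlim A d i)) x := by
        have hf := hXc.fderiv_right (m := ((k-(i+1):ℕ):WithTop ℕ∞)) hcast
        exact (ContinuousLinearMap.apply ℝ _
          (Pi.single (d i) (1:ℝ))).contDiff.comp_contDiffAt x hf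
      have hL : ContDiffAt ℝ ((k-(i+1):ℕ) : WithTop ℕ∞) (fun y =>
          Matrix.fromBlocks (Xlim A d i y) (pd (d i) (Xlim A d i) y) 0 (Xlim A d i y)) x := by
        rw [contDiffAt_matrix]
        intro r c
        cases r with
        | inl a =>
          cases c with
          | inl b =>
            simpa using contDiffAt_matrix.mp (hXc.of_le hle) a b
          | inr b =>
            simpa using contDiffAt_matrix.mp hpdc a b
        | inr a =>
          cases c with
          | inl b => simpa using contDiffAt_const
          | inr b => simpa using contDiffAt_matrix.mp (hXc.of_le hle) a b
      exact hL.congr_of_eventuallyEq hlim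
    · -- structural invariant
      rw [hlim.self_of_nhds]
      constructor
      · intro r c hns hnw
        cases r with
        | inl a =>
          cases c with
          | inl b =>
            rw [Matrix.fromBlocks_apply₁₁]
            exact hx0.2.1 a b (by simpa using hns) (by simpa using hnw)
          | inr b =>
            rw [Matrix.fromBlocks_apply₁₂]
            simp only [wIdx_inl, wIdx_inr, not_lt] at hnw
            have hsab : ¬ slotEq a b := fun hs => by
              have := slotEq_w hs; omega
            have hwab : ¬ wIdx a < wIdx b := by omega
            apply pd_entry_zero (d i) hd a b
            apply hx.mono
            intro y hy
            exact hy.2.1 a b hsab hwab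
        | inr a =>
          cases c with
          | inl b => rfl
          | inr b =>
            rw [Matrix.fromBlocks_apply₂₂]
            have hnw' : ¬ wIdx a < wIdx b := by
              simp only [wIdx_inr, not_lt] at hnw ⊢; omega
            exact hx0.2.1 a b (by simpa using hns) hnw'
      · intro r c hs
        cases r with
        | inl a =>
          cases c with
          | inl b =>
            rw [Matrix.fromBlocks_apply₁₁]
            exact hx0.2.2 a b (by simpa using hs)
          | inr b => exact absurd hs (by simp)
        | inr a =>
          cases c with
          | inl b => exact absurd hs (by simp)
          | inr b =>
            rw [Matrix.fromBlocks_apply₂₂]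
            exact hx0.2.2 a b (by simpa using hs)

/-- **Lemma (Jordan structure of the block matrices).**  If `A` is `k` times differentiable with
values in `M_n(Ω, m)` near `x̄`, then (i) for all sufficiently small `ε ≠ 0`,
`Q_i(x̄, ε) ∈ M_{2^i n}(Ω, (i+1)m)`, and (ii) `X_i(x̄) ∈ M_{2^i n}(Ω, (i+1)m)`, for
`i = 1, …, k`.  (Below `i` runs over `0, …, k-1`, so `Qof … (Xlim A d i)` is `Q_{i+1}` and
`Xlim A d (i+1)` is `X_{i+1}`, whose Jordan blocks are bounded by `(i+2)m`.) -/
theorem Q_and_X_jordan_structure {n j m k : ℕ} (Ω : Set ℂ)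
    (A : (Fin j → ℝ) → Matrix (Fin n) (Fin n) ℂ) (xbar : Fin j → ℝ) (d : ℕ → Fin j)
    (hA : ∀ᶠ x in 𝓝 xbar, ContDiffAt ℝ k A x)
    (hM : ∀ᶠ x in 𝓝 xbar, MnSet Ω m (A x)) :
    ∀ i < k,
      (∀ᶠ ε in 𝓝[≠] (0 : ℝ), MnSet Ω ((i + 2) * m) (Qof (Xlim A d i) (d i) xbar ε)) ∧
        MnSet Ω ((i + 2) * m) (Xlim A d (i + 1) xbar) := by
  intro i hik
  have hGood := good_main A xbar d hA
  have hGi : ∀ᶠ x in 𝓝 xbar, SInv i (Xlim A d i x) (A x) ∧ MnSet Ω m (A x) :=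
    ((hGood i (by omega)).and hM).mono (fun x hx => ⟨hx.1.2, hx.2⟩)
  have hx0 := hGi.self_of_nhds
  have hstab0 := SInv_spec_stab hx0.1 hx0.2.2
  constructor
  · -- part (i) : the difference quotient block matrices
    have htend : Filter.Tendsto (fun ε : ℝ => xbar + ε • (Pi.single (d i) 1 : Fin j → ℝ))
        (𝓝[≠] (0:ℝ)) (𝓝 xbar) := by
      have hc : Continuous (fun ε : ℝ => xbar + ε • (Pi.single (d i) 1 : Fin j → ℝ)) :=
        continuous_const.add (continuous_id.smul continuous_const)
      have h2 := hc.continuousAt (x := (0:ℝ))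
      rw [ContinuousAt] at h2
      simp only [zero_smul, add_zero] at h2
      exact h2.mono_left nhdsWithin_le_nhds
    have hev := htend.eventually hGi
    apply hev.mono
    intro ε hε
    have hstab' := SInv_spec_stab hε.1 hε.2.2
    set x' := xbar + ε • (Pi.single (d i) 1 : Fin j → ℝ) with hx'
    set X := Xlim A d i xbar with hX
    set X' := Xlim A d i x' with hX'
    set c : ℝ := ε⁻¹ with hc
    set T : Matrix (Idx n (i+1)) (Idx n (i+1)) ℂ := Matrix.fromBlocks 1 (c • 1) 0 1 with hT
    set Ti : Matrix (Idx n (i+1)) (Idx n (i+1)) ℂ := Matrix.fromBlocks 1 (-c • 1) 0 1 with hTi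
    set D : Matrix (Idx n (i+1)) (Idx n (i+1)) ℂ := Matrix.fromBlocks X 0 0 X' with hD
    have hTTi : T * Ti = 1 := by
      rw [hT, hTi, show ((1 : Matrix (Idx n (i+1)) (Idx n (i+1)) ℂ)) =
        Matrix.fromBlocks 1 0 0 1 from (Matrix.fromBlocks_one).symm]
      erw [Matrix.fromBlocks_multiply]
      congr 1 <;> simp [Matrix.smul_mul, Matrix.mul_smul]
    have hTiT : Ti * T = 1 := by
      rw [hT, hTi, show ((1 : Matrix (Idx n (i+1)) (Idx n (i+1)) ℂ)) =
        Matrix.fromBlocks 1 0 0 1 from (Matrix.fromBlocks_one).symm]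
      erw [Matrix.fromBlocks_multiply]
      congr 1 <;> simp [Matrix.smul_mul, Matrix.mul_smul]
    have hQ : Qof (Xlim A d i) (d i) xbar ε = T * D * Ti := by
      rw [hT, hTi, hD]
      erw [Matrix.fromBlocks_multiply, Matrix.fromBlocks_multiply]
      rw [Qof]
      congr 1 <;> simp [Matrix.smul_mul, Matrix.mul_smul, smul_sub, sub_eq_add_neg, add_comm]
      all_goals rfl
    rw [hQ]
    constructor
    · -- spectrum
      refine subset_trans (mySpectrumConj hTTi hTiT)
        (subset_trans (mySpectrumBlockDiag (L := Idx n i) (R := Idx n i) X X') ?_)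
      intro μ hμ
      cases hμ with
      | inl h => exact hx0.2.1 (hstab0.1 h)
      | inr h => exact hε.2.1 (hstab'.1 h)
    · -- jordan bound
      apply jordan_le_of_stab
      apply myStabConj hTTi hTiT
      intro μ
      apply myStabBlockDiag (L := Idx n i) (R := Idx n i)
      · intro μ' v
        exact stab_mono (Nat.mul_le_mul_right m (by omega)) (hstab0.2 μ') v
      · intro μ' v
        exact stab_mono (Nat.mul_le_mul_right m (by omega)) (hstab'.2 μ') v
  · -- part (ii) : the limit matrices
    have hGi1 : SInv (i+1) (Xlim A d (i+1) xbar) (A xbar) :=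
      ((hGood (i+1) hik).self_of_nhds).2
    have hstab1 := SInv_spec_stab hGi1 hx0.2.2
    constructor
    · exact subset_trans hstab1.1 hx0.2.1
    · apply jordan_le_of_stab
      intro μ v
      have := hstab1.2 μ v
      rw [show (i+1+1)*m = (i+2)*m by ring] at this
      exact this
end

section
/- Let X = A + iB be a complex n×n matrix with A and B real, let X = VJV^{−1} be a Jordan decomposition of X, and let f be a scalar function, defined on the spectrum of X with sufficiently many derivatives, satisfying f(J̄) = f(J)̄ (conjugation commutes with f on the Jordan form). Then f([[A, B],[−B, A]]) = [[Re f(X), Im f(X)],[−Im f(X), Re f(X)]], where f is applied as a primary matrix function. -/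
open Matrix Filter Asymptotics Topology

attribute [local instance] Matrix.frobeniusNormedAddCommGroup Matrix.frobeniusNormedSpace

/-- A matrix is in Jordan canonical form: zero off the diagonal and superdiagonal,
superdiagonal entries `0` or `1`, and consecutive diagonal entries linked by a nonzero
superdiagonal entry are equal. -/
def IsJordanForm {N : ℕ} (J : Matrix (Fin N) (Fin N) ℂ) : Prop :=
  (∀ a b : Fin N, b ≠ a → (b : ℕ) ≠ (a : ℕ) + 1 → J a b = 0) ∧
  ∀ a b : Fin N, (b : ℕ) = (a : ℕ) + 1 → (J a b = 0 ∨ (J a b = 1 ∧ J a a = J b b))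


set_option maxHeartbeats 1000000
set_option linter.unusedSectionVars false
section AuxAll
open Polynomial Module

section PolyLemmas

lemma iteratedDeriv_polyeval (p : ℂ[X]) (i : ℕ) :
    iteratedDeriv i (fun w => p.eval w) = fun z => (Polynomial.derivative^[i] p).eval z := by
  induction i generalizing p with
  | zero => simp
  | succ i ih =>
    rw [iteratedDeriv_succ, ih p]
    funext z
    rw [Function.iterate_succ_apply']
    exact Polynomial.deriv (𝕜 := ℂ) _

lemma pow_X_sub_C_dvd_of_derivs {p : ℂ[X]} {μ : ℂ} {k : ℕ}
    (h : ∀ i < k, (Polynomial.derivative^[i] p).eval μ = 0) :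
    (X - C μ) ^ k ∣ p := by
  have h1 : (X : ℂ[X]) ^ k ∣ taylor μ p := by
    rw [X_pow_dvd_iff]
    intro d hd
    rw [taylor_coeff]
    have h2 : (Nat.factorial d) • (hasseDeriv d p) = Polynomial.derivative^[d] p := by
      have := congrFun (factorial_smul_hasseDeriv (R := ℂ) d) p
      simpa using this
    have h3 : ((Nat.factorial d) • hasseDeriv d p).eval μ = 0 := by rw [h2]; exact h d hd
    rw [eval_smul, nsmul_eq_mul, mul_eq_zero] at h3
    have hd0 : ((Nat.factorial d : ℕ) : ℂ) ≠ 0 := Nat.cast_ne_zero.mpr (Nat.factorial_ne_zero d)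
    exact h3.resolve_left hd0
  obtain ⟨s, hs⟩ := h1
  have h4 := congrArg (taylorAlgHom (R := ℂ) (-μ)) hs
  rw [_root_.map_mul, _root_.map_pow] at h4
  have hT : ∀ q : ℂ[X], taylorAlgHom (R := ℂ) (-μ) q = taylor (-μ) q := fun q => rfl
  rw [hT, hT, hT, taylor_taylor, neg_add_cancel, taylor_zero, taylor_X] at h4
  have h5 : (X + C (-μ) : ℂ[X]) = X - C μ := by rw [map_neg]; ring
  rw [h5] at h4
  exact ⟨_, h4⟩

end PolyLemmas

section EndLemmas

variable {V : Type*} [AddCommGroup V] [Module ℂ V] [FiniteDimensional ℂ V]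

/-- stabilization set -/
def estab (f : Module.End ℂ V) (μ : ℂ) : Set ℕ :=
  {k | LinearMap.ker ((f - μ • 1) ^ k) = LinearMap.ker ((f - μ • 1) ^ (k + 1))}

lemma estab_upward {f : Module.End ℂ V} {μ : ℂ} {k m : ℕ} (hk : k ∈ estab f μ) (hm : k ≤ m) :
    m ∈ estab f μ := by
  have h := Module.End.ker_pow_constant (k := k) hk
  have e1 := h (m - k)
  have e2 := h (m + 1 - k)
  rw [Nat.add_sub_cancel' hm] at e1
  rw [Nat.add_sub_cancel' (hm.trans (Nat.le_succ m))] at e2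
  exact e1.symm.trans e2

lemma finrank_mem_estab (f : Module.End ℂ V) (μ : ℂ) : finrank ℂ V ∈ estab f μ :=
  (Module.End.ker_pow_eq_ker_pow_finrank_of_le (f := f - μ • 1)
    (m := finrank ℂ V + 1) (Nat.le_succ _)).symm

lemma estab_nonempty (f : Module.End ℂ V) (μ : ℂ) : (estab f μ).Nonempty :=
  ⟨_, finrank_mem_estab f μ⟩

/-- index of an eigenvalue -/
noncomputable def enu (f : Module.End ℂ V) (μ : ℂ) : ℕ := sInf (estab f μ)

lemma enu_mem (f : Module.End ℂ V) (μ : ℂ) : enu f μ ∈ estab f μ :=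
  Nat.sInf_mem (estab_nonempty f μ)

lemma ker_pow_enu_eq {f : Module.End ℂ V} {μ : ℂ} {m : ℕ} (hm : enu f μ ≤ m) :
    LinearMap.ker ((f - μ • 1) ^ m) = LinearMap.ker ((f - μ • 1) ^ (enu f μ)) := by
  have h := Module.End.ker_pow_constant (enu_mem f μ) (m - enu f μ)
  rw [Nat.add_sub_cancel' hm] at h
  exact h.symm

lemma ker_pow_enu_eq_maxGen (f : Module.End ℂ V) (μ : ℂ) :
    LinearMap.ker ((f - μ • 1) ^ (enu f μ)) = f.maxGenEigenspace μ := by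
  rw [Module.End.maxGenEigenspace_eq_genEigenspace_finrank, Module.End.genEigenspace_nat]
  by_cases h : enu f μ ≤ finrank ℂ V
  · exact (ker_pow_enu_eq h).symm
  · push_neg at h
    have : enu f μ ≤ finrank ℂ V := Nat.sInf_le (finrank_mem_estab f μ)
    omega

lemma maxGen_eq_bot_of_notMem_spectrum {f : Module.End ℂ V} {μ : ℂ}
    (h : μ ∉ spectrum ℂ f) : f.maxGenEigenspace μ = ⊥ := by
  by_contra hne
  obtain ⟨v, hv, hv0⟩ := Submodule.exists_mem_ne_zero_of_ne_bot hne
  rw [Module.End.mem_maxGenEigenspace] at hv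
  obtain ⟨k, hk⟩ := hv
  classical
  have hex : ∃ j : ℕ, ((f - μ • 1) ^ j) v = 0 := ⟨k, hk⟩
  have hj : ((f - μ • 1) ^ Nat.find hex) v = 0 := Nat.find_spec hex
  have hjpos : Nat.find hex ≠ 0 := by
    intro h0
    rw [h0, pow_zero] at hj
    exact hv0 (by simpa using hj)
  obtain ⟨j', hj'⟩ : ∃ j', Nat.find hex = j' + 1 := ⟨Nat.find hex - 1, by omega⟩
  have hw : ((f - μ • 1) ^ j') v ≠ 0 := Nat.find_min hex (by omega)
  set w := ((f - μ • 1) ^ j') v with hwdef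
  have hfw : (f - μ • 1) w = 0 := by
    rw [hwdef, ← Module.End.mul_apply, ← pow_succ']
    rw [← hj']
    exact hj
  have heig : f.HasEigenvalue μ := by
    apply Module.End.hasEigenvalue_of_hasEigenvector (x := w)
    constructor
    · rw [Module.End.mem_eigenspace_iff]
      have h2 : f w - μ • w = 0 := by
        simpa [LinearMap.sub_apply] using hfw
      have := sub_eq_zero.mp h2
      simpa using this
    · exact hw
  exact h (Module.End.hasEigenvalue_iff_mem_spectrum.mp heig)

lemma aeval_prod_eq_zero_end (f : Module.End ℂ V) (s : Finset ℂ) (m : ℂ → ℕ)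
    (hs : spectrum ℂ f ⊆ ↑s) (hm : ∀ μ ∈ spectrum ℂ f, enu f μ ≤ m μ) :
    Polynomial.aeval f (∏ μ ∈ s, (X - C μ) ^ (m μ)) = 0 := by
  have htop := Module.End.iSup_maxGenEigenspace_eq_top f
  apply LinearMap.ext; intro v
  simp only [LinearMap.zero_apply]
  have hle : ∀ μ : ℂ, f.maxGenEigenspace μ ≤
      LinearMap.ker (Polynomial.aeval f (∏ μ ∈ s, (X - C μ) ^ (m μ))) := by
    intro μ
    by_cases hμ : μ ∈ spectrum ℂ f
    · intro w hw
      rw [LinearMap.mem_ker]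
      have hprod : (∏ x ∈ s, (X - C x) ^ (m x)) =
          (∏ x ∈ s.erase μ, (X - C x) ^ (m x)) * (X - C μ) ^ (m μ) :=
        (Finset.prod_erase_mul s _ (hs hμ)).symm
      rw [hprod, _root_.map_mul, Module.End.mul_apply]
      have h1 : (Polynomial.aeval f ((X - C μ) ^ (m μ))) w = 0 := by
        rw [map_pow, map_sub, aeval_X, aeval_C, Module.algebraMap_end_eq_smul_id]
        have hw' : w ∈ LinearMap.ker ((f - μ • 1) ^ (m μ)) := by
          rw [ker_pow_enu_eq (hm μ hμ), ker_pow_enu_eq_maxGen]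
          exact hw
        simpa [Module.End.one_eq_id] using hw'
      rw [h1, map_zero]
    · rw [maxGen_eq_bot_of_notMem_spectrum hμ]
      exact bot_le
  have : v ∈ (⊤ : Submodule ℂ V) := trivial
  rw [← htop] at this
  exact (iSup_le hle) this

end EndLemmas
section MatrixTrans
open Polynomial Module
variable {n : Type*} [Fintype n] [DecidableEq n]

/-- matrix to endomorphism -/
noncomputable def toE (A : Matrix n n ℂ) : Module.End ℂ (n → ℂ) := Matrix.toLinAlgEquiv' A

lemma mulVecLin_matPow (A : Matrix n n ℂ) (μ : ℂ) (k : ℕ) :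
    ((A - μ • 1) ^ k).mulVecLin = ((toE A) - μ • 1) ^ k := by
  have h0 : ∀ B : Matrix n n ℂ, B.mulVecLin = Matrix.toLinAlgEquiv' B := fun B => rfl
  rw [h0, map_pow]
  congr 1
  have h1 : (μ • 1 : Matrix n n ℂ) = algebraMap ℂ _ μ := (Algebra.algebraMap_eq_smul_one μ).symm
  have h2 : (μ • 1 : Module.End ℂ (n → ℂ)) = algebraMap ℂ _ μ :=
    (Algebra.algebraMap_eq_smul_one μ).symm
  rw [map_sub, h1, h2, AlgEquiv.commutes]
  rfl

lemma nuIdx_eq_enu (A : Matrix n n ℂ) (μ : ℂ) : nuIdx A μ = enu (toE A) μ := by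
  unfold nuIdx enu estab
  congr 1
  ext k
  simp only [Set.mem_setOf_eq, mulVecLin_matPow]

lemma spectrum_toE (A : Matrix n n ℂ) : spectrum ℂ (toE A) = spectrum ℂ A :=
  AlgEquiv.spectrum_eq Matrix.toLinAlgEquiv' A

lemma aeval_toE (A : Matrix n n ℂ) (p : ℂ[X]) :
    Polynomial.aeval (toE A) p = toE (Polynomial.aeval A p) :=
  Polynomial.aeval_algHom_apply Matrix.toLinAlgEquiv'.toAlgHom A p

lemma aeval_eq_zero_of_derivs_vanish (A : Matrix n n ℂ) (r : ℂ[X])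
    (hr : ∀ μ ∈ spectrum ℂ A, ∀ i < nuIdx A μ, (Polynomial.derivative^[i] r).eval μ = 0) :
    Polynomial.aeval A r = 0 := by
  classical
  set s := (Matrix.finite_spectrum A).toFinset with hs
  have hQdvd : (∏ μ ∈ s, (X - C μ) ^ (nuIdx A μ)) ∣ r := by
    apply Finset.prod_dvd_of_coprime
    · intro μ hμ ν hν hne
      exact IsCoprime.pow (Polynomial.isCoprime_X_sub_C_of_isUnit_sub
        (IsUnit.mk0 _ (sub_ne_zero.mpr hne)))
    · intro μ hμ
      refine pow_X_sub_C_dvd_of_derivs fun i hi => hr μ ?_ i hi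
      simpa [hs] using hμ
  obtain ⟨t, ht⟩ := hQdvd
  have hQ : Polynomial.aeval A (∏ μ ∈ s, (X - C μ) ^ (nuIdx A μ)) = 0 := by
    have h1 : Polynomial.aeval (toE A) (∏ μ ∈ s, (X - C μ) ^ (nuIdx A μ)) = 0 := by
      apply aeval_prod_eq_zero_end (toE A) s (fun μ => nuIdx A μ)
      · rw [spectrum_toE]
        intro μ hμ
        simpa [hs] using hμ
      · intro μ hμ
        rw [nuIdx_eq_enu]
    rw [aeval_toE] at h1
    have h2 : toE (Polynomial.aeval A (∏ μ ∈ s, (X - C μ) ^ (nuIdx A μ))) = toE 0 := by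
      rw [h1]; simp [toE]
    exact Matrix.toLinAlgEquiv'.injective h2
  rw [ht, _root_.map_mul, hQ, zero_mul]

lemma aeval_eq_aeval_of_interp (f : ℂ → ℂ) (A : Matrix n n ℂ) {p q : ℂ[X]}
    (hp : ∀ μ ∈ spectrum ℂ A, ∀ i < nuIdx A μ,
      iteratedDeriv i (fun z => p.eval z) μ = iteratedDeriv i f μ)
    (hq : ∀ μ ∈ spectrum ℂ A, ∀ i < nuIdx A μ,
      iteratedDeriv i (fun z => q.eval z) μ = iteratedDeriv i f μ) :
    Polynomial.aeval A p = Polynomial.aeval A q := by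
  have h := aeval_eq_zero_of_derivs_vanish A (p - q) ?_
  · rw [_root_.map_sub] at h
    exact sub_eq_zero.mp h
  · intro μ hμ i hi
    have e1 := congrFun (iteratedDeriv_polyeval p i) μ
    have e2 := congrFun (iteratedDeriv_polyeval q i) μ
    have hsub : Polynomial.derivative^[i] (p - q)
        = Polynomial.derivative^[i] p - Polynomial.derivative^[i] q := by
      simp only [← Module.End.pow_apply, map_sub]
    rw [hsub, eval_sub, ← e1, ← e2, hp μ hμ i hi, hq μ hμ i hi, sub_self]

lemma matFun_eq_aeval (f : ℂ → ℂ) (A : Matrix n n ℂ) (p : ℂ[X])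
    (hp : ∀ μ ∈ spectrum ℂ A, ∀ i < nuIdx A μ,
      iteratedDeriv i (fun z => p.eval z) μ = iteratedDeriv i f μ) :
    matFun f A = Polynomial.aeval A p := by
  have hex : ∃ p : ℂ[X], ∀ μ ∈ spectrum ℂ A, ∀ i < nuIdx A μ,
      iteratedDeriv i (fun z => Polynomial.eval z p) μ = iteratedDeriv i f μ := ⟨p, hp⟩
  unfold matFun
  rw [dif_pos hex]
  exact aeval_eq_aeval_of_interp f A hex.choose_spec hp

end MatrixTrans

end AuxAll
section Hermite
open Polynomial Module

lemma hermite_interpolation (s : Finset ℂ) (m : ℂ → ℕ) (g : ℂ → ℂ) :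
    ∃ p : ℂ[X], ∀ μ ∈ s, ∀ i < m μ,
      iteratedDeriv i (fun z => p.eval z) μ = iteratedDeriv i g μ := by
  classical
  set M := ∑ μ ∈ s, m μ with hM
  set E : degreeLT ℂ M →ₗ[ℂ] ((μ : {x // x ∈ s}) → Fin (m μ.1) → ℂ) :=
    LinearMap.pi fun μ => LinearMap.pi fun i =>
      (Polynomial.leval (R := ℂ) μ.1) ∘ₗ ((Polynomial.derivative : ℂ[X] →ₗ[ℂ] ℂ[X]) ^ (i : ℕ))
        ∘ₗ (degreeLT ℂ M).subtype with hE
  have hEapp : ∀ (p : degreeLT ℂ M) (μ : {x // x ∈ s}) (i : Fin (m μ.1)),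
      E p μ i = (Polynomial.derivative^[(i : ℕ)] (p : ℂ[X])).eval μ.1 := by
    intro p μ i
    simp [hE, LinearMap.pi_apply, Module.End.pow_apply, Polynomial.leval_apply]
  have hinj : Function.Injective E := by
    rw [← LinearMap.ker_eq_bot, LinearMap.ker_eq_bot']
    intro p hp
    have hall : ∀ μ ∈ s, (X - C μ) ^ (m μ) ∣ (p : ℂ[X]) := by
      intro μ hμ
      apply pow_X_sub_C_dvd_of_derivs
      intro i hi
      have := congrFun (congrFun hp ⟨μ, hμ⟩) ⟨i, hi⟩
      rw [hEapp] at this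
      simpa using this
    have hdvd : (∏ μ ∈ s, (X - C μ) ^ (m μ)) ∣ (p : ℂ[X]) := by
      apply Finset.prod_dvd_of_coprime
      · intro μ hμ ν hν hne
        exact IsCoprime.pow (Polynomial.isCoprime_X_sub_C_of_isUnit_sub
          (IsUnit.mk0 _ (sub_ne_zero.mpr hne)))
      · exact fun μ hμ => hall μ hμ
    have hQmonic : (∏ μ ∈ s, (X - C μ) ^ (m μ)).Monic :=
      monic_prod_of_monic _ _ fun μ _ => (monic_X_sub_C μ).pow _
    have hQdeg : (∏ μ ∈ s, (X - C μ) ^ (m μ)).natDegree = M := by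
      rw [natDegree_prod]
      · simp [natDegree_pow, natDegree_X_sub_C, hM]
      · intro μ hμ; exact ((monic_X_sub_C μ).pow _).ne_zero
    have hplt : (p : ℂ[X]).degree < (M : ℕ) := mem_degreeLT.mp p.2
    have hz : (p : ℂ[X]) = 0 := by
      refine eq_zero_of_dvd_of_degree_lt hdvd ?_
      rw [Polynomial.degree_eq_natDegree hQmonic.ne_zero, hQdeg]
      exact hplt
    exact Subtype.ext hz
  have hdim : finrank ℂ (degreeLT ℂ M) =
      finrank ℂ ((μ : {x // x ∈ s}) → Fin (m μ.1) → ℂ) := by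
    rw [(Polynomial.degreeLTEquiv ℂ M).finrank_eq]
    simp only [Module.finrank_pi_fintype, Module.finrank_pi, Fintype.card_fin,
      Finset.univ_eq_attach]
    rw [hM, ← Finset.sum_attach s m]
    simp [Module.finrank_self]
  haveI : FiniteDimensional ℂ (degreeLT ℂ M) :=
    LinearEquiv.finiteDimensional (Polynomial.degreeLTEquiv ℂ M).symm
  obtain ⟨p, hp⟩ := (LinearMap.injective_iff_surjective_of_finrank_eq_finrank hdim).mp hinj
    (fun μ i => iteratedDeriv (i : ℕ) g μ.1)
  refine ⟨(p : ℂ[X]), fun μ hμ i hi => ?_⟩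
  have h1 := congrFun (congrFun hp ⟨μ, hμ⟩) ⟨i, hi⟩
  rw [hEapp] at h1
  rw [congrFun (iteratedDeriv_polyeval (p : ℂ[X]) i) μ]
  exact h1

end Hermite
section ConjBlocks
open Polynomial Module
variable {n : Type*} [Fintype n] [DecidableEq n]

lemma mfconj_pow {V W : Matrix n n ℂ} (hVW : V * W = 1) (hWV : W * V = 1)
    (M : Matrix n n ℂ) (k : ℕ) : (V * M * W) ^ k = V * M ^ k * W := by
  induction k with
  | zero => rw [pow_zero, pow_zero, mul_one, hVW]
  | succ k ih =>
    rw [pow_succ, ih, pow_succ]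
    have h : V * M ^ k * W * (V * M * W) = V * M ^ k * (W * V) * (M * W) := by
      simp only [mul_assoc]
    rw [h, hWV, mul_one, ← mul_assoc, mul_assoc V]

lemma conj_sub_smul {V W : Matrix n n ℂ} (hVW : V * W = 1)
    (M : Matrix n n ℂ) (μ : ℂ) : V * M * W - μ • 1 = V * (M - μ • 1) * W := by
  rw [Matrix.mul_sub, Matrix.sub_mul]
  congr 1
  rw [Matrix.mul_smul, Matrix.smul_mul, mul_one, hVW]

lemma aeval_conj {V W : Matrix n n ℂ} (hVW : V * W = 1) (hWV : W * V = 1)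
    (M : Matrix n n ℂ) (p : ℂ[X]) :
    Polynomial.aeval (V * M * W) p = V * Polynomial.aeval M p * W := by
  induction p using Polynomial.induction_on' with
  | add p q hp hq =>
    rw [_root_.map_add, _root_.map_add, hp, hq, Matrix.mul_add, Matrix.add_mul]
  | monomial k a =>
    rw [aeval_monomial, aeval_monomial, mfconj_pow hVW hWV]
    simp only [Algebra.algebraMap_eq_smul_one, smul_mul_assoc, one_mul, mul_smul_comm]

lemma isUnit_conj {V W : Matrix n n ℂ} (hVW : V * W = 1) (hWV : W * V = 1)
    (N : Matrix n n ℂ) : IsUnit (V * N * W) ↔ IsUnit N := by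
  have hVu : IsUnit V := ⟨⟨V, W, hVW, hWV⟩, rfl⟩
  have hWu : IsUnit W := ⟨⟨W, V, hWV, hVW⟩, rfl⟩
  constructor
  · intro h
    have hN : N = W * (V * N * W) * V := by
      simp only [mul_assoc, hWV, mul_one]
      rw [← mul_assoc, hWV, one_mul]
    rw [hN]
    exact (hWu.mul h).mul hVu
  · intro h
    exact (hVu.mul h).mul hWu

lemma spectrum_conj {V W : Matrix n n ℂ} (hVW : V * W = 1) (hWV : W * V = 1)
    (M : Matrix n n ℂ) : spectrum ℂ (V * M * W) = spectrum ℂ M := by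
  ext μ
  rw [spectrum.mem_iff, spectrum.mem_iff, not_iff_not]
  have h : algebraMap ℂ (Matrix n n ℂ) μ - V * M * W
      = V * (algebraMap ℂ (Matrix n n ℂ) μ - M) * W := by
    rw [Matrix.mul_sub, Matrix.sub_mul]
    congr 1
    rw [Algebra.algebraMap_eq_smul_one, Matrix.mul_smul, Matrix.smul_mul, mul_one, hVW]
  rw [h, isUnit_conj hVW hWV]

lemma ker_conj {V W : Matrix n n ℂ} (hVW : V * W = 1) (hWV : W * V = 1)
    (N : Matrix n n ℂ) :
    LinearMap.ker ((V * N * W).mulVecLin)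
      = (LinearMap.ker N.mulVecLin).map V.mulVecLin := by
  ext v
  simp only [LinearMap.mem_ker, Submodule.mem_map, Matrix.mulVecLin_apply]
  constructor
  · intro h
    refine ⟨W *ᵥ v, ?_, ?_⟩
    · have h1 : V *ᵥ (N *ᵥ (W *ᵥ v)) = 0 := by
        rw [Matrix.mulVec_mulVec, Matrix.mulVec_mulVec]
        exact h
      have h2 := congrArg (fun u => W *ᵥ u) h1
      simpa [Matrix.mulVec_mulVec, ← mul_assoc, hWV, Matrix.one_mulVec] using h2
    · rw [Matrix.mulVec_mulVec, hVW, Matrix.one_mulVec]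
  · rintro ⟨w, hw, rfl⟩
    rw [Matrix.mulVec_mulVec]
    have hc : V * N * W * V = V * N := by
      simp only [mul_assoc, hWV, mul_one]
    rw [hc, ← Matrix.mulVec_mulVec, hw, Matrix.mulVec_zero]

lemma nuIdx_conj {V W : Matrix n n ℂ} (hVW : V * W = 1) (hWV : W * V = 1)
    (M : Matrix n n ℂ) (μ : ℂ) : nuIdx (V * M * W) μ = nuIdx M μ := by
  have hVinj : Function.Injective V.mulVecLin := by
    intro x y hxy
    have h2 := congrArg (fun u => W *ᵥ u) hxy
    simpa [Matrix.mulVecLin_apply, Matrix.mulVec_mulVec, hWV, Matrix.one_mulVec] using h2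
  unfold nuIdx
  congr 1
  ext k
  have hconj : ∀ j : ℕ, (V * M * W - μ • 1) ^ j = V * (M - μ • 1) ^ j * W := by
    intro j
    rw [conj_sub_smul hVW, mfconj_pow hVW hWV]
  simp only [Set.mem_setOf_eq, hconj, ker_conj hVW hWV]
  constructor
  · intro h
    exact Submodule.map_injective_of_injective hVinj h
  · intro h
    rw [h]

lemma fromBlocks_diag_pow (A B : Matrix n n ℂ) (k : ℕ) :
    (Matrix.fromBlocks A 0 0 B) ^ k = Matrix.fromBlocks (A ^ k) 0 0 (B ^ k) := by
  induction k with
  | zero => rw [pow_zero, pow_zero, pow_zero, Matrix.fromBlocks_one]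
  | succ k ih =>
    rw [pow_succ, ih, Matrix.fromBlocks_multiply]
    simp [pow_succ]

lemma fromBlocks_diag_sub_smul (A B : Matrix n n ℂ) (μ : ℂ) :
    Matrix.fromBlocks A 0 0 B - μ • 1 = Matrix.fromBlocks (A - μ • 1) 0 0 (B - μ • 1) := by
  rw [← Matrix.fromBlocks_one, Matrix.fromBlocks_smul, sub_eq_add_neg, Matrix.fromBlocks_neg,
    Matrix.fromBlocks_add]
  simp [sub_eq_add_neg]

lemma aeval_fromBlocks (A B : Matrix n n ℂ) (p : ℂ[X]) :
    Polynomial.aeval (Matrix.fromBlocks A 0 0 B) p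
      = Matrix.fromBlocks (Polynomial.aeval A p) 0 0 (Polynomial.aeval B p) := by
  induction p using Polynomial.induction_on' with
  | add p q hp hq =>
    rw [_root_.map_add, _root_.map_add, _root_.map_add, hp, hq, Matrix.fromBlocks_add, add_zero]
  | monomial k a =>
    rw [aeval_monomial, aeval_monomial, aeval_monomial, fromBlocks_diag_pow]
    simp only [Algebra.algebraMap_eq_smul_one, smul_mul_assoc, one_mul]
    rw [Matrix.fromBlocks_smul]
    simp

lemma spectrum_fromBlocks_diag (A B : Matrix n n ℂ) :
    spectrum ℂ (Matrix.fromBlocks A 0 0 B) = spectrum ℂ A ∪ spectrum ℂ B := by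
  ext μ
  rw [Set.mem_union, spectrum.mem_iff, spectrum.mem_iff, spectrum.mem_iff]
  have h : algebraMap ℂ (Matrix (n ⊕ n) (n ⊕ n) ℂ) μ - Matrix.fromBlocks A 0 0 B
      = Matrix.fromBlocks (algebraMap ℂ (Matrix n n ℂ) μ - A) 0 0
          (algebraMap ℂ (Matrix n n ℂ) μ - B) := by
    simp only [Algebra.algebraMap_eq_smul_one]
    rw [← Matrix.fromBlocks_one (l := n) (m := n), Matrix.fromBlocks_smul, sub_eq_add_neg,
      Matrix.fromBlocks_neg, Matrix.fromBlocks_add]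
    simp [sub_eq_add_neg]
  rw [h, Matrix.isUnit_iff_isUnit_det, Matrix.det_fromBlocks_zero₂₁,
    Matrix.isUnit_iff_isUnit_det, Matrix.isUnit_iff_isUnit_det]
  rw [isUnit_iff_ne_zero, isUnit_iff_ne_zero, isUnit_iff_ne_zero, mul_ne_zero_iff]
  tauto

lemma mulVec_fromBlocks_diag_eq_zero_iff (A B : Matrix n n ℂ) (v : n ⊕ n → ℂ) :
    (Matrix.fromBlocks A 0 0 B) *ᵥ v = 0
      ↔ A *ᵥ (v ∘ Sum.inl) = 0 ∧ B *ᵥ (v ∘ Sum.inr) = 0 := by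
  have hv : (Matrix.fromBlocks A 0 0 B) *ᵥ v
      = Sum.elim (A *ᵥ (v ∘ Sum.inl)) (B *ᵥ (v ∘ Sum.inr)) := by
    have h0 : v = Sum.elim (v ∘ Sum.inl) (v ∘ Sum.inr) := by
      funext x; cases x <;> rfl
    conv_lhs => rw [h0]
    rw [Matrix.fromBlocks_mulVec]
    simp
  rw [hv]
  constructor
  · intro h
    exact ⟨funext fun i => congrFun h (Sum.inl i), funext fun i => congrFun h (Sum.inr i)⟩
  · rintro ⟨h1, h2⟩
    funext x
    cases x with
    | inl i => exact congrFun h1 i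
    | inr i => exact congrFun h2 i

lemma mstab_of_nuIdx_le (A : Matrix n n ℂ) (μ : ℂ) {k : ℕ} (h : nuIdx A μ ≤ k) :
    LinearMap.ker (((A - μ • 1) ^ k).mulVecLin)
      = LinearMap.ker (((A - μ • 1) ^ (k + 1)).mulVecLin) := by
  rw [mulVecLin_matPow, mulVecLin_matPow]
  rw [nuIdx_eq_enu] at h
  exact estab_upward (enu_mem (toE A) μ) h

lemma nuIdx_fromBlocks_le (A B : Matrix n n ℂ) (μ : ℂ) :
    nuIdx (Matrix.fromBlocks A 0 0 B) μ ≤ max (nuIdx A μ) (nuIdx B μ) := by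
  apply Nat.sInf_le
  set k := max (nuIdx A μ) (nuIdx B μ) with hk
  have hA := mstab_of_nuIdx_le A μ (le_max_left _ _ : nuIdx A μ ≤ k)
  have hB := mstab_of_nuIdx_le B μ (le_max_right _ _ : nuIdx B μ ≤ k)
  have hAk : ∀ w, ((A - μ • 1) ^ k) *ᵥ w = 0 ↔ ((A - μ • 1) ^ (k + 1)) *ᵥ w = 0 := by
    intro w
    have := SetLike.ext_iff.mp hA w
    simpa [LinearMap.mem_ker, Matrix.mulVecLin_apply] using this
  have hBk : ∀ w, ((B - μ • 1) ^ k) *ᵥ w = 0 ↔ ((B - μ • 1) ^ (k + 1)) *ᵥ w = 0 := by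
    intro w
    have := SetLike.ext_iff.mp hB w
    simpa [LinearMap.mem_ker, Matrix.mulVecLin_apply] using this
  show LinearMap.ker _ = LinearMap.ker _
  ext v
  simp only [LinearMap.mem_ker, Matrix.mulVecLin_apply, fromBlocks_diag_sub_smul,
    fromBlocks_diag_pow, mulVec_fromBlocks_diag_eq_zero_iff]
  exact and_congr (hAk _) (hBk _)

end ConjBlocks
section SBlocks
open Polynomial Module
variable {n : Type*} [Fintype n] [DecidableEq n]

noncomputable def Smat (n : Type*) [Fintype n] [DecidableEq n] : Matrix (n ⊕ n) (n ⊕ n) ℂ :=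
  Matrix.fromBlocks 1 1 (Complex.I • 1) (-(Complex.I) • 1)

noncomputable def Smat' (n : Type*) [Fintype n] [DecidableEq n] : Matrix (n ⊕ n) (n ⊕ n) ℂ :=
  Matrix.fromBlocks ((1/2 : ℂ) • 1) ((-(Complex.I)/2) • 1) ((1/2 : ℂ) • 1) ((Complex.I/2) • 1)

lemma hI : Complex.I * Complex.I = -1 := Complex.I_mul_I

lemma Smat_mul_Smat' : Smat n * Smat' n = 1 := by
  have e1 : ((1:ℂ) / 2 + 1 / 2 : ℂ) = 1 := by ring
  have e2 : ((1:ℂ) / 2 * Complex.I + 1 / 2 * -Complex.I : ℂ) = 0 := by ring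
  have e3 : (-Complex.I / 2 * Complex.I + Complex.I / 2 * -Complex.I : ℂ) = 1 := by
    linear_combination -hI
  rw [Smat, Smat', Matrix.fromBlocks_multiply]
  simp only [Matrix.smul_mul, Matrix.mul_smul, smul_smul, one_mul, mul_one, ← neg_smul,
    ← add_smul]
  have e0 : (-Complex.I / 2 + Complex.I / 2 : ℂ) = 0 := by ring
  simp only [e0, e1, e2, e3, zero_smul, one_smul]
  exact Matrix.fromBlocks_one

lemma Smat'_mul_Smat : Smat' n * Smat n = 1 := by
  have e1 : ((1:ℂ) / 2 + Complex.I * (-Complex.I / 2) : ℂ) = 1 := by linear_combination -hI/2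
  have e2 : ((1:ℂ) / 2 + -(Complex.I * (-Complex.I / 2)) : ℂ) = 0 := by linear_combination hI/2
  have e3 : ((1:ℂ) / 2 + Complex.I * (Complex.I / 2) : ℂ) = 0 := by linear_combination hI/2
  have e4 : ((1:ℂ) / 2 + -(Complex.I * (Complex.I / 2)) : ℂ) = 1 := by linear_combination -hI/2
  rw [Smat, Smat', Matrix.fromBlocks_multiply]
  simp only [Matrix.smul_mul, Matrix.mul_smul, smul_smul, one_mul, mul_one, ← neg_smul,
    ← add_smul]
  have f1 : ((1:ℂ) / 2 + -Complex.I * (-Complex.I / 2) : ℂ) = 0 := by linear_combination hI/2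
  have f2 : ((1:ℂ) / 2 + -Complex.I * (Complex.I / 2) : ℂ) = 1 := by linear_combination -hI/2
  simp only [e1, e2, e3, e4, f1, f2, zero_smul, one_smul]
  exact Matrix.fromBlocks_one

lemma c_re_entry (z : ℂ) : (1/2 : ℂ) * z + (1/2 : ℂ) * (starRingEnd ℂ z) = ((z.re : ℂ)) := by
  have h := Complex.add_conj z
  push_cast at h
  linear_combination (1/2 : ℂ) * h

lemma c_im_entry (z : ℂ) :
    (-(Complex.I)/2) * z + (Complex.I/2) * (starRingEnd ℂ z) = ((z.im : ℂ)) := by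
  have h := Complex.sub_conj z
  push_cast at h
  have h2 : Complex.I ^ 2 = -1 := Complex.I_sq
  linear_combination (-(Complex.I)/2) * h - (z.im : ℂ) * h2

lemma BC (M : Matrix n n ℂ) :
    Smat n * Matrix.fromBlocks M 0 0 (M.map (starRingEnd ℂ)) * Smat' n
      = Matrix.fromBlocks (M.map fun z => ((z.re : ℂ))) (M.map fun z => ((z.im : ℂ)))
          (-(M.map fun z => ((z.im : ℂ)))) (M.map fun z => ((z.re : ℂ))) := by
  rw [Smat, Smat', Matrix.fromBlocks_multiply, Matrix.fromBlocks_multiply]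
  simp only [Matrix.mul_zero, Matrix.zero_mul, add_zero, zero_add, one_mul, Matrix.mul_smul,
    Matrix.smul_mul, Matrix.mul_one, smul_smul]
  have h2 : Complex.I ^ 2 = -1 := Complex.I_sq
  ext i j
  rcases i with i | i <;> rcases j with j | j <;>
    simp only [Matrix.fromBlocks_apply₁₁, Matrix.fromBlocks_apply₁₂, Matrix.fromBlocks_apply₂₁,
      Matrix.fromBlocks_apply₂₂, Matrix.add_apply, Matrix.smul_apply, Matrix.map_apply,
      Matrix.neg_apply, smul_eq_mul]
  · exact c_re_entry (M i j)
  · exact c_im_entry (M i j)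
  · linear_combination - c_im_entry (M i j)
  · have h := Complex.add_conj (M i j)
    push_cast at h
    linear_combination (1/2 : ℂ) * h - ((M i j + (starRingEnd ℂ) (M i j))/2) * h2

end SBlocks
/-- **Theorem (matrix functions of the real–imaginary block form).**  Let `X = A + iB` with
`A, B` real, `X = V J V⁻¹` a Jordan decomposition, and `f` defined with sufficiently many
derivatives on the spectrum of `X` (and its conjugate) and satisfying `f(J̄) = conj (f(J))`.
Then `f([[A, B], [-B, A]]) = [[Re f(X), Im f(X)], [-Im f(X), Re f(X)]]`. -/
theorem matFun_block_real_imag {N : ℕ} (X V J : Matrix (Fin N) (Fin N) ℂ) (f : ℂ → ℂ)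
    (hV : IsUnit V.det) (hJ : IsJordanForm J) (hX : X = V * J * V⁻¹)
    (hf : ∀ μ ∈ spectrum ℂ X,
      ContDiffAt ℂ (nuIdx X μ) f μ ∧ ContDiffAt ℂ (nuIdx X μ) f ((starRingEnd ℂ) μ))
    (hconj : matFun f (J.map (starRingEnd ℂ)) = (matFun f J).map (starRingEnd ℂ)) :
    matFun f
        (Matrix.fromBlocks (X.map fun z => ((z.re : ℂ))) (X.map fun z => ((z.im : ℂ)))
          (-(X.map fun z => ((z.im : ℂ)))) (X.map fun z => ((z.re : ℂ)))) =
      Matrix.fromBlocks ((matFun f X).map fun z => ((z.re : ℂ)))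
        ((matFun f X).map fun z => ((z.im : ℂ)))
        (-((matFun f X).map fun z => ((z.im : ℂ))))
        ((matFun f X).map fun z => ((z.re : ℂ))) := by
  classical
  have hVW : V * V⁻¹ = 1 := Matrix.mul_nonsing_inv V hV
  have hWV : V⁻¹ * V = 1 := Matrix.nonsing_inv_mul V hV
  have hmapmul : ∀ (A B : Matrix (Fin N) (Fin N) ℂ),
      (A * B).map (starRingEnd ℂ) = A.map (starRingEnd ℂ) * B.map (starRingEnd ℂ) :=
    fun A B => Matrix.map_mul
  have hmapone : (1 : Matrix (Fin N) (Fin N) ℂ).map (starRingEnd ℂ) = 1 :=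
    Matrix.map_one _ (map_zero _) (map_one _)
  have hVcWc : V.map (starRingEnd ℂ) * V⁻¹.map (starRingEnd ℂ) = 1 := by
    rw [← hmapmul, hVW, hmapone]
  have hWcVc : V⁻¹.map (starRingEnd ℂ) * V.map (starRingEnd ℂ) = 1 := by
    rw [← hmapmul, hWV, hmapone]
  have hXc : X.map (starRingEnd ℂ)
      = V.map (starRingEnd ℂ) * J.map (starRingEnd ℂ) * V⁻¹.map (starRingEnd ℂ) := by
    rw [hX, hmapmul, hmapmul]
  have hspX : spectrum ℂ X = spectrum ℂ J := by rw [hX, spectrum_conj hVW hWV]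
  have hnuX : ∀ μ, nuIdx X μ = nuIdx J μ := fun μ => by rw [hX, nuIdx_conj hVW hWV]
  have hspXc : spectrum ℂ (X.map (starRingEnd ℂ)) = spectrum ℂ (J.map (starRingEnd ℂ)) := by
    rw [hXc, spectrum_conj hVcWc hWcVc]
  have hnuXc : ∀ μ, nuIdx (X.map (starRingEnd ℂ)) μ = nuIdx (J.map (starRingEnd ℂ)) μ :=
    fun μ => by rw [hXc, nuIdx_conj hVcWc hWcVc]
  obtain ⟨p, hp⟩ := hermite_interpolation
    ((Matrix.finite_spectrum X).toFinset
      ∪ (Matrix.finite_spectrum (X.map (starRingEnd ℂ))).toFinset)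
    (fun μ => max (nuIdx X μ) (nuIdx (X.map (starRingEnd ℂ)) μ)) f
  have hpX : ∀ μ ∈ spectrum ℂ X, ∀ i < nuIdx X μ,
      iteratedDeriv i (fun z => p.eval z) μ = iteratedDeriv i f μ := by
    intro μ hμ i hi
    exact hp μ (Finset.mem_union_left _ ((Matrix.finite_spectrum X).mem_toFinset.mpr hμ)) i
      (lt_of_lt_of_le hi (le_max_left _ _))
  have hpXc : ∀ μ ∈ spectrum ℂ (X.map (starRingEnd ℂ)), ∀ i < nuIdx (X.map (starRingEnd ℂ)) μ,
      iteratedDeriv i (fun z => p.eval z) μ = iteratedDeriv i f μ := by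
    intro μ hμ i hi
    exact hp μ (Finset.mem_union_right _ ((Matrix.finite_spectrum _).mem_toFinset.mpr hμ)) i
      (lt_of_lt_of_le hi (le_max_right _ _))
  have hFX : matFun f X = Polynomial.aeval X p := matFun_eq_aeval f X p hpX
  have hFXc : matFun f (X.map (starRingEnd ℂ))
      = Polynomial.aeval (X.map (starRingEnd ℂ)) p := matFun_eq_aeval f _ p hpXc
  have hFJ : matFun f J = Polynomial.aeval J p := by
    apply matFun_eq_aeval
    intro μ hμ i hi
    exact hpX μ (hspX ▸ hμ) i (by rw [hnuX]; exact hi)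
  have hFJc : matFun f (J.map (starRingEnd ℂ))
      = Polynomial.aeval (J.map (starRingEnd ℂ)) p := by
    apply matFun_eq_aeval
    intro μ hμ i hi
    exact hpXc μ (hspXc ▸ hμ) i (by rw [hnuXc]; exact hi)
  have hcc : Polynomial.aeval (X.map (starRingEnd ℂ)) p
      = (Polynomial.aeval X p).map (starRingEnd ℂ) := by
    rw [hXc, aeval_conj hVcWc hWcVc, ← hFJc, hconj, hFJ, ← hmapmul, ← hmapmul]
    rw [hX, aeval_conj hVW hWV]
  have hSS' := Smat_mul_Smat' (n := Fin N)
  have hS'S := Smat'_mul_Smat (n := Fin N)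
  rw [← BC X]
  have hMain : matFun f
      (Smat (Fin N) * Matrix.fromBlocks X 0 0 (X.map (starRingEnd ℂ)) * Smat' (Fin N))
      = Polynomial.aeval
        (Smat (Fin N) * Matrix.fromBlocks X 0 0 (X.map (starRingEnd ℂ)) * Smat' (Fin N)) p := by
    apply matFun_eq_aeval
    intro μ hμ i hi
    rw [spectrum_conj hSS' hS'S, spectrum_fromBlocks_diag] at hμ
    have hnu : nuIdx
        (Smat (Fin N) * Matrix.fromBlocks X 0 0 (X.map (starRingEnd ℂ)) * Smat' (Fin N)) μ
        ≤ max (nuIdx X μ) (nuIdx (X.map (starRingEnd ℂ)) μ) := by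
      rw [nuIdx_conj hSS' hS'S]
      exact nuIdx_fromBlocks_le _ _ μ
    refine hp μ ?_ i (lt_of_lt_of_le hi hnu)
    rcases hμ with h | h
    · exact Finset.mem_union_left _ ((Matrix.finite_spectrum X).mem_toFinset.mpr h)
    · exact Finset.mem_union_right _ ((Matrix.finite_spectrum _).mem_toFinset.mpr h)
  rw [hMain, aeval_conj hSS' hS'S, aeval_fromBlocks, hcc, ← hFX, ← BC (matFun f X)]
end
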